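/- arXiv:2011.00919 — 8 statements merged into one kernel-verified Lean document; each statement's English description precedes it below -/
import Mathlib

section
/- For every z ∈ ℂ with Im z ≠ 0, the function δ satisfies the two-sided bound (1 − c)^{1/2} ≤ |δ(z)| ≤ (1 − c)^{−1/2}. -/
open MeasureTheory

/-- Theorem 4.1(i): the scalar RH solution δ is uniformly bounded:
(1-c)^{1/2} ≤ |δ(z)| ≤ (1-c)^{-1/2} for Im z ≠ 0. -/
theorem delta_uniform_bound
    (c : ℝ) (hc0 : 0 ≤ c) (hc1 : c < 1) (z₀ : ℝ)
    (ρ : ℝ → ℝ) (hρm : Measurable ρ)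
    (hρ : ∀ ξ : ℝ, 0 ≤ ρ ξ ∧ ρ ξ ≤ c)
    (hint : IntegrableOn (fun ξ : ℝ => Real.log (1 - ρ ξ)) (Set.Iio z₀))
    (ν : ℝ → ℝ) (hν : ∀ ξ : ℝ, ν ξ = -(1 / (2 * Real.pi)) * Real.log (1 - ρ ξ))
    (δ : ℂ → ℂ)
    (hδ : ∀ z : ℂ, δ z =
      Complex.exp (Complex.I * ∫ ξ in Set.Iio z₀, (ν ξ : ℂ) / ((ξ : ℂ) - z)))
    (z : ℂ) (hz : z.im ≠ 0) :
    Real.sqrt (1 - c) ≤ ‖δ z‖ ∧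
      ‖δ z‖ ≤ (Real.sqrt (1 - c))⁻¹ := by
  have hπ : (0:ℝ) < Real.pi := Real.pi_pos
  have h1c : (0:ℝ) < 1 - c := by linarith
  set a := z.re with ha
  set b := z.im with hb
  have hbpos : 0 < |b| := abs_pos.mpr hz
  set M : ℝ := -Real.log (1 - c) with hM
  have hM0 : 0 ≤ M := by
    have := Real.log_nonpos (by linarith) (by linarith : 1 - c ≤ 1)
    simp only [hM]; linarith
  -- ν is nonnegative and bounded
  have hν0 : ∀ ξ : ℝ, 0 ≤ ν ξ ∧ ν ξ ≤ M / (2 * Real.pi) := by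
    intro ξ
    have h1 : (0:ℝ) < 1 - ρ ξ := by linarith [(hρ ξ).2]
    have h2 : 1 - ρ ξ ≤ 1 := by linarith [(hρ ξ).1]
    have hlog1 : Real.log (1 - ρ ξ) ≤ 0 := Real.log_nonpos (by linarith) h2
    have hlog2 : -M ≤ Real.log (1 - ρ ξ) := by
      have := Real.log_le_log h1c (by linarith [(hρ ξ).2] : 1 - c ≤ 1 - ρ ξ)
      simp only [hM]; linarith
    have hinv : (0:ℝ) < 1 / (2 * Real.pi) := by positivity
    rw [hν ξ]
    constructor
    · nlinarith
    · rw [div_eq_mul_inv M, mul_comm M, ← one_div]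
      nlinarith
  -- measurability of ν
  have νmeas : Measurable ν := by
    have : Measurable fun ξ : ℝ => -(1 / (2 * Real.pi)) * Real.log (1 - ρ ξ) :=
      ((measurable_const.sub hρm).log).const_mul _
    have hfe : ν = fun ξ : ℝ => -(1 / (2 * Real.pi)) * Real.log (1 - ρ ξ) := funext hν
    rw [hfe]; exact this
  -- integrability of ν
  have νint : IntegrableOn ν (Set.Iio z₀) := by
    have h := hint.const_mul (-(1 / (2 * Real.pi)))
    exact h.congr (Filter.Eventually.of_forall fun ξ => (hν ξ).symm)
  -- the complex integrand
  set F : ℝ → ℂ := fun ξ => (ν ξ : ℂ) / ((ξ : ℂ) - z) with hF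
  -- basic estimate on |ξ - z|
  have habs_ge : ∀ ξ : ℝ, |b| ≤ ‖(ξ : ℂ) - z‖ := by
    intro ξ
    have := Complex.abs_im_le_norm ((ξ : ℂ) - z)
    simpa using this
  have fint : IntegrableOn F (Set.Iio z₀) := by
    refine Integrable.mono' ((νint.abs).const_mul |b|⁻¹) ?_ ?_
    · exact ((Complex.measurable_ofReal.comp νmeas).div
        ((Complex.measurable_ofReal.sub measurable_const))).aestronglyMeasurable
    · refine Filter.Eventually.of_forall fun ξ => ?_
      have h1 : ‖F ξ‖ = |ν ξ| / ‖(ξ : ℂ) - z‖ := by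
        simp [hF, map_div₀]
      rw [h1, inv_mul_eq_div]
      have h2 : 0 < ‖(ξ : ℂ) - z‖ := lt_of_lt_of_le hbpos (habs_ge ξ)
      rw [div_le_div_iff₀ h2 hbpos]
      nlinarith [mul_le_mul_of_nonneg_left (habs_ge ξ) (abs_nonneg (ν ξ))]
  -- normSq formula
  have hnq : ∀ ξ : ℝ, Complex.normSq ((ξ : ℂ) - z) = (ξ - a) ^ 2 + b ^ 2 := by
    intro ξ
    simp [Complex.normSq_apply, Complex.sub_re, Complex.sub_im]
    ring
  have hnqpos : ∀ ξ : ℝ, 0 < (ξ - a) ^ 2 + b ^ 2 := by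
    intro ξ
    have : 0 < b ^ 2 := by positivity
    nlinarith [sq_nonneg (ξ - a)]
  -- the imaginary part of F
  have himval : ∀ ξ : ℝ, (F ξ).im = ν ξ * b / ((ξ - a) ^ 2 + b ^ 2) := by
    intro ξ
    have hv : ((ξ : ℂ) - z).im = -b := by simp [hb]
    have hvr : ((ξ : ℂ) - z).re = ξ - a := by simp [ha]
    rw [hF]
    rw [Complex.div_im, hv, hvr, hnq ξ]
    simp only [Complex.ofReal_im, Complex.ofReal_re, zero_mul, zero_div, zero_sub]
    ring
  -- the Poisson kernel and its integral
  set h : ℝ → ℝ := fun x => |b| * (((x - a) ^ 2 + b ^ 2)⁻¹) with hh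
  have hhrw : ∀ x : ℝ, h x = |b|⁻¹ * (1 + (|b|⁻¹ * (x - a)) ^ 2)⁻¹ := by
    intro x
    have h0 := hnqpos x
    have hbne : b ≠ 0 := hz
    have e : 1 + (|b|⁻¹ * (x - a)) ^ 2 = ((x - a) ^ 2 + b ^ 2) / b ^ 2 := by
      rw [mul_pow, ← sq_abs b]
      field_simp
      ring
    rw [hh, e, inv_div, div_eq_mul_inv, ← mul_assoc]
    rw [← sq_abs b, sq, inv_mul_cancel_left₀ (ne_of_gt hbpos)]
  have hIntH : Integrable h := by
    have h1 : Integrable fun y : ℝ => (1 + y ^ 2)⁻¹ := integrable_inv_one_add_sq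
    have h2 : Integrable fun x : ℝ => (1 + (|b|⁻¹ * x) ^ 2)⁻¹ :=
      h1.comp_mul_left' (by positivity : (|b|:ℝ)⁻¹ ≠ 0)
    have h3 : Integrable fun x : ℝ => (1 + (|b|⁻¹ * (x - a)) ^ 2)⁻¹ :=
      h2.comp_sub_right a
    have h4 := h3.const_mul |b|⁻¹
    exact h4.congr (Filter.Eventually.of_forall fun x => (hhrw x).symm)
  have hIntHval : ∫ x : ℝ, h x = Real.pi := by
    have e1 : ∫ x : ℝ, h x = |b|⁻¹ * ∫ x : ℝ, (1 + (|b|⁻¹ * (x - a)) ^ 2)⁻¹ := by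
      rw [← integral_const_mul]
      exact integral_congr_ae (Filter.Eventually.of_forall fun x => hhrw x)
    have e2 : (∫ x : ℝ, (1 + (|b|⁻¹ * (x - a)) ^ 2)⁻¹)
        = ∫ x : ℝ, (1 + (|b|⁻¹ * x) ^ 2)⁻¹ :=
      integral_sub_right_eq_self (μ := volume) (fun x => (1 + (|b|⁻¹ * x) ^ 2)⁻¹) a
    have e3 : (∫ x : ℝ, (1 + (|b|⁻¹ * x) ^ 2)⁻¹) = |b| * Real.pi := by
      have := MeasureTheory.Measure.integral_comp_mul_left
        (fun y : ℝ => (1 + y ^ 2)⁻¹) |b|⁻¹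
      rw [this, integral_univ_inv_one_add_sq]
      simp [abs_of_pos hbpos, smul_eq_mul]
    rw [e1, e2, e3, ← mul_assoc, inv_mul_cancel₀ (ne_of_gt hbpos), one_mul]
  -- the bounding function
  set B : ℝ → ℝ := fun ξ => M / (2 * Real.pi) * h ξ with hB
  have hIntB : Integrable B := hIntH.const_mul _
  have hBval : ∫ x : ℝ, B x = M / 2 := by
    rw [hB]
    rw [integral_const_mul, hIntHval]
    field_simp
  -- main estimate
  have key : |∫ ξ in Set.Iio z₀, (F ξ).im| ≤ M / 2 := by
    have step1 : |∫ ξ in Set.Iio z₀, (F ξ).im| ≤ ∫ ξ in Set.Iio z₀, |(F ξ).im| := by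
      simpa [Real.norm_eq_abs] using
        norm_integral_le_integral_norm (μ := volume.restrict (Set.Iio z₀))
          (fun ξ => (F ξ).im)
    have step2 : (∫ ξ in Set.Iio z₀, |(F ξ).im|) ≤ ∫ ξ in Set.Iio z₀, B ξ := by
      refine setIntegral_mono_on (fint.im.abs) (hIntB.integrableOn)
        measurableSet_Iio (fun ξ _ => ?_)
      have h0 := hnqpos ξ
      have hab : |(F ξ).im| = ν ξ * (|b| / ((ξ - a) ^ 2 + b ^ 2)) := by
        rw [himval ξ, abs_div, abs_mul, abs_of_nonneg (hν0 ξ).1,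
          abs_of_pos h0]
        ring
      rw [hab]
      have hhx : B ξ = M / (2 * Real.pi) * (|b| / ((ξ - a) ^ 2 + b ^ 2)) := by
        show M / (2 * Real.pi) * (|b| * ((ξ - a) ^ 2 + b ^ 2)⁻¹) = _
        ring
      rw [hhx]
      exact mul_le_mul_of_nonneg_right (hν0 ξ).2 (by positivity)
    have step3 : (∫ ξ in Set.Iio z₀, B ξ) ≤ ∫ ξ : ℝ, B ξ := by
      refine setIntegral_le_integral hIntB ?_
      refine Filter.Eventually.of_forall fun ξ => ?_
      have h0 := hnqpos ξ
      simp only [Pi.zero_apply]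
      show (0:ℝ) ≤ M / (2 * Real.pi) * (|b| * ((ξ - a) ^ 2 + b ^ 2)⁻¹)
      positivity
    rw [hBval] at step3
    linarith
  -- compute |δ z|
  have habsδ : ‖δ z‖
      = Real.exp (-(∫ ξ in Set.Iio z₀, F ξ).im) := by
    rw [hδ z, Complex.norm_exp]
    congr 1
    simp [Complex.mul_re, hF]
  have him : (∫ ξ in Set.Iio z₀, F ξ).im = ∫ ξ in Set.Iio z₀, (F ξ).im :=
    (integral_im fint).symm
  rw [habsδ, him]
  set t : ℝ := ∫ ξ in Set.Iio z₀, (F ξ).im with ht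
  have htle : -(M/2) ≤ t ∧ t ≤ M/2 := abs_le.mp key
  -- sqrt(1-c) = exp(-(M/2))
  have hsq : Real.sqrt (1 - c) = Real.exp (-(M / 2)) := by
    rw [Real.sqrt_eq_rpow, Real.rpow_def_of_pos h1c]
    congr 1
    simp only [hM]
    ring
  constructor
  · rw [hsq]
    exact Real.exp_le_exp.mpr (by linarith [htle.2])
  · rw [hsq, ← Real.exp_neg]
    exact Real.exp_le_exp.mpr (by linarith [htle.1])
end

section
/- Assume in addition that there is a constant K ≥ 0 with |ν(ξ) − ν(z₀)| ≤ K (z₀ − ξ)^{1/2} for all ξ ∈ (z₀ − 1, z₀), where ν(z₀) = −(1/(2π)) log(1 − ρ(z₀)). Define, for z = z₀ + s e^{iφ} with s > 0 and φ ∈ (0, π), β(z, z₀) = −ν(z₀)·Log(z − z₀ + 1) + ∫_{ξ ∈ (−∞, z₀)} ( ν(ξ) − χ(ξ) ν(z₀) )/(ξ − z) dξ, where χ is the indicator function of the interval (z₀ − 1, z₀) and Log is the principal branch of the complex logarithm; define β(z₀, z₀) by the same formula with z replaced by z₀ (the integral converges absolutely by the Hölder assumption). Then for each fixed angle φ ∈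 (0, π) there exists a constant C > 0 such that for all s ∈ (0, 1/2], | β(z₀ + s e^{iφ}, z₀) − β(z₀, z₀) | ≤ C s^{1/2}. -/
open MeasureTheory

lemma rpow_int_half (z₀ s : ℝ) (hs : 0 < s) :
    ∫ ξ in Set.Ioo (z₀ - s) z₀, (z₀ - ξ) ^ (-(1/2) : ℝ) = 2 * Real.sqrt s := by
  rw [← integral_Ioc_eq_integral_Ioo,
    ← intervalIntegral.integral_of_le (by linarith : z₀ - s ≤ z₀),
    intervalIntegral.integral_comp_sub_left (fun x => x ^ (-(1/2) : ℝ)) z₀]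
  simp only [sub_self, sub_sub_cancel]
  rw [integral_rpow (Or.inl (by norm_num))]
  rw [Real.sqrt_eq_rpow]
  rw [Real.zero_rpow (by norm_num)]
  norm_num
  ring

lemma intgOn_rpow_half (z₀ s : ℝ) (hs : 0 < s) :
    IntegrableOn (fun ξ : ℝ => (z₀ - ξ) ^ (-(1/2) : ℝ)) (Set.Ioo (z₀ - s) z₀) := by
  have h : IntervalIntegrable (fun x : ℝ => x ^ (-(1/2) : ℝ)) volume 0 s :=
    intervalIntegral.intervalIntegrable_rpow' (by norm_num)
  have h2 := (h.comp_sub_left z₀).symm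
  simp only [sub_zero] at h2
  exact (intervalIntegrable_iff_integrableOn_Ioo_of_le (by linarith)).mp h2

lemma rpow_int_3half (z₀ s : ℝ) (hs : 0 < s) (hs1 : s ≤ 1) :
    ∫ ξ in Set.Ioc (z₀ - 1) (z₀ - s), (z₀ - ξ) ^ (-(3/2) : ℝ) ≤ 2 / Real.sqrt s := by
  rw [← intervalIntegral.integral_of_le (by linarith : z₀ - 1 ≤ z₀ - s),
    intervalIntegral.integral_comp_sub_left (fun x => x ^ (-(3/2) : ℝ)) z₀]
  simp only [sub_sub_cancel]
  rw [integral_rpow (Or.inr ⟨by norm_num, by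
    simp only [Set.mem_uIcc]; push_neg
    constructor <;> intro h <;> nlinarith⟩)]
  have h1 : s ^ (-(3/2) + 1 : ℝ) = (Real.sqrt s)⁻¹ := by
    rw [show (-(3/2) + 1 : ℝ) = -(1/2) by norm_num, Real.rpow_neg hs.le,
      Real.sqrt_eq_rpow]
  rw [h1, Real.one_rpow]
  have h2 : (0:ℝ) < Real.sqrt s := Real.sqrt_pos.mpr hs
  have h5 : (1 - (Real.sqrt s)⁻¹) / (-(3/2) + 1 : ℝ) = 2 * ((Real.sqrt s)⁻¹ - 1) := by
    norm_num; ring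
  rw [h5, div_eq_mul_inv]
  linarith

lemma intgOn_rpow_3half (z₀ s : ℝ) (hs : 0 < s) (hs1 : s ≤ 1) :
    IntegrableOn (fun ξ : ℝ => (z₀ - ξ) ^ (-(3/2) : ℝ)) (Set.Ioc (z₀ - 1) (z₀ - s)) := by
  have h : IntervalIntegrable (fun x : ℝ => x ^ (-(3/2) : ℝ)) volume s 1 :=
    intervalIntegral.intervalIntegrable_rpow (Or.inr (by
      simp only [Set.mem_uIcc]; push_neg
      constructor <;> intro h <;> nlinarith))
  have h2 := (h.comp_sub_left z₀).symm
  rw [intervalIntegrable_iff_integrableOn_Ioc_of_le (by linarith)] at h2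
  exact h2

lemma sqrt_div_self_rpow (x : ℝ) (hx : 0 < x) : Real.sqrt x / x = x ^ (-(1/2):ℝ) := by
  rw [Real.sqrt_eq_rpow, ← Real.rpow_sub_one hx.ne']
  norm_num

lemma sqrt_div_sq_rpow (x : ℝ) (hx : 0 < x) : Real.sqrt x / (x*x) = x ^ (-(3/2):ℝ) := by
  rw [Real.sqrt_eq_rpow, show x*x = x^(2:ℝ) by
      rw [show (2:ℝ) = ((2:ℕ):ℝ) by norm_num, Real.rpow_natCast]; ring,
    ← Real.rpow_sub hx]
  norm_num

set_option maxHeartbeats 2000000 in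
/-- The key estimate |β(z, z₀) − β(z₀, z₀)| = O(√(z − z₀)) along a ray
z = z₀ + s e^{iφ}, φ ∈ (0, π), underlying Theorem 4.1(iv) and Lemma 5.1. -/
theorem beta_Holder_estimate
    (c : ℝ) (hc0 : 0 ≤ c) (hc1 : c < 1) (z₀ : ℝ)
    (ρ : ℝ → ℝ) (hρm : Measurable ρ)
    (hρ : ∀ ξ : ℝ, 0 ≤ ρ ξ ∧ ρ ξ ≤ c)
    (hint : IntegrableOn (fun ξ : ℝ => Real.log (1 - ρ ξ)) (Set.Iio z₀))
    (ν : ℝ → ℝ) (hν : ∀ ξ : ℝ, ν ξ = -(1 / (2 * Real.pi)) * Real.log (1 - ρ ξ))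
    (K : ℝ) (hK0 : 0 ≤ K)
    (hK : ∀ ξ ∈ Set.Ioo (z₀ - 1) z₀, |ν ξ - ν z₀| ≤ K * Real.sqrt (z₀ - ξ))
    (β : ℂ → ℂ)
    (hβ : ∀ z : ℂ, β z =
      -(ν z₀ : ℂ) * Complex.log (z - (z₀ : ℂ) + 1) +
        ∫ ξ in Set.Iio z₀,
          ((ν ξ - Set.indicator (Set.Ioo (z₀ - 1) z₀) (fun _ => (1:ℝ)) ξ * ν z₀ : ℝ) : ℂ)
            / ((ξ : ℂ) - z))
    (φ : ℝ) (hφ1 : 0 < φ) (hφ2 : φ < Real.pi) :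
    ∃ C > (0:ℝ), ∀ s : ℝ, 0 < s → s ≤ 1 / 2 →
      ‖β ((z₀ : ℂ) + (s : ℂ) * Complex.exp ((φ : ℂ) * Complex.I)) - β (z₀ : ℂ)‖
        ≤ C * Real.sqrt s := by
  have hsin : 0 < Real.sin φ := Real.sin_pos_of_pos_of_lt_pi hφ1 hφ2
  have hcos1 : Real.cos φ ≤ 1 := Real.cos_le_one φ
  have hcosg : -1 < Real.cos φ := by
    have := Real.cos_lt_cos_of_nonneg_of_le_pi hφ1.le le_rfl hφ2
    simpa [Real.cos_pi] using this
  have h1c : 0 < 1 + Real.cos φ := by linarith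
  set f : ℝ → ℝ :=
    fun ξ => ν ξ - Set.indicator (Set.Ioo (z₀ - 1) z₀) (fun _ => (1:ℝ)) ξ * ν z₀ with hfdef
  have hβ' : ∀ w : ℂ, β w = -(ν z₀ : ℂ) * Complex.log (w - (z₀:ℂ) + 1) +
      ∫ ξ in Set.Iio z₀, ((f ξ : ℝ) : ℂ) / ((ξ : ℂ) - w) := fun w => hβ w
  have hνfun : ν = fun ξ => -(1 / (2 * Real.pi)) * Real.log (1 - ρ ξ) := funext hν
  have hνm : Measurable ν := by
    rw [hνfun]; exact (Real.measurable_log.comp (measurable_const.sub hρm)).const_mul _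
  have hνint : IntegrableOn ν (Set.Iio z₀) := by rw [hνfun]; exact hint.const_mul _
  have hχint : IntegrableOn
      (fun ξ => Set.indicator (Set.Ioo (z₀ - 1) z₀) (fun _ => (1:ℝ)) ξ * ν z₀)
      (Set.Iio z₀) := by
    have heq : (fun ξ => Set.indicator (Set.Ioo (z₀ - 1) z₀) (fun _ => (1:ℝ)) ξ * ν z₀)
        = Set.indicator (Set.Ioo (z₀-1) z₀) (fun _ => ν z₀) := by
      funext ξ; simp only [Set.indicator_apply]; split_ifs <;> simp
    rw [heq]
    exact ((integrable_indicator_iff measurableSet_Ioo).mpr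
      (integrableOn_const measure_Ioo_lt_top.ne)).integrableOn
  have hfint : IntegrableOn f (Set.Iio z₀) := hνint.sub hχint
  have hνabs : IntegrableOn (fun ξ : ℝ => |ν ξ|) (Set.Iio z₀) := hνint.abs
  have hfm : Measurable f :=
    hνm.sub ((measurable_const.indicator measurableSet_Ioo).mul_const _)
  have hfb : ∀ ξ ∈ Set.Ioo (z₀-1) z₀, |f ξ| ≤ K * Real.sqrt (z₀ - ξ) := by
    intro ξ hξ
    simp only [hfdef, Set.indicator_of_mem hξ, one_mul]
    exact hK ξ hξ
  have hfb2 : ∀ ξ : ℝ, ξ ≤ z₀ - 1 → f ξ = ν ξ := by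
    intro ξ hξ
    have : ξ ∉ Set.Ioo (z₀-1) z₀ := by
      intro h; exact absurd hξ (not_le.mpr h.1)
    simp only [hfdef, Set.indicator_of_notMem this, zero_mul, sub_zero]
  set I₁ : ℝ := ∫ ξ in Set.Iic (z₀-1), |ν ξ| with hI₁
  have hI₁0 : 0 ≤ I₁ := integral_nonneg (fun _ => abs_nonneg _)
  set C : ℝ := 2*|ν z₀| + 2*I₁ + 2*K/Real.sin φ + 4*K/(1+Real.cos φ) + 1 with hC
  have hCpos : 0 < C := by positivity
  refine ⟨C, hCpos, ?_⟩
  intro s hs hs2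
  set z : ℂ := (z₀:ℂ) + (s:ℂ) * Complex.exp ((φ:ℂ)*Complex.I) with hz
  have hsq0 : 0 < Real.sqrt s := Real.sqrt_pos.mpr hs
  have hsqs : s ≤ Real.sqrt s := by
    nlinarith [Real.sq_sqrt hs.le, Real.sqrt_nonneg s, Real.sqrt_le_one.mpr (by linarith : s ≤ 1)]
  have hzre : z.re = z₀ + s * Real.cos φ := by
    simp [hz, Complex.add_re, Complex.mul_re, Complex.exp_ofReal_mul_I_re,
      Complex.exp_ofReal_mul_I_im]
  have hzim : z.im = s * Real.sin φ := by
    simp [hz, Complex.add_im, Complex.mul_im, Complex.exp_ofReal_mul_I_re,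
      Complex.exp_ofReal_mul_I_im]
  have habs_e : ‖(s:ℂ) * Complex.exp ((φ:ℂ)*Complex.I)‖ = s := by
    rw [norm_mul, Complex.norm_exp]
    simp [Complex.norm_real, abs_of_pos hs]
  have hximz : ∀ ξ : ℝ, ((ξ:ℂ) - z).im = -(s * Real.sin φ) := by
    intro ξ; simp [Complex.sub_im, hzim]
  have habs_low1 : ∀ ξ : ℝ, s * Real.sin φ ≤ ‖(ξ:ℂ) - z‖ := by
    intro ξ
    have h := Complex.abs_im_le_norm ((ξ:ℂ) - z)
    rw [hximz ξ, abs_neg, abs_of_pos (by positivity)] at h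
    exact h
  have hxz_ne : ∀ ξ : ℝ, (ξ:ℂ) - z ≠ 0 := by
    intro ξ h
    have h2 := hximz ξ
    rw [h] at h2
    simp only [Complex.zero_im] at h2
    nlinarith
  have hxz₀_ne : ∀ ξ : ℝ, ξ < z₀ → (ξ:ℂ) - (z₀:ℂ) ≠ 0 := by
    intro ξ hξ h
    have h2 : ((ξ:ℂ) - (z₀:ℂ)).re = ξ - z₀ := by simp
    rw [h] at h2
    simp only [Complex.zero_re] at h2
    linarith
  have habs_y : ∀ ξ : ℝ, ξ < z₀ → ‖(ξ:ℂ) - (z₀:ℂ)‖ = z₀ - ξ := by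
    intro ξ hξ
    rw [show ((ξ:ℂ) - (z₀:ℂ)) = ((ξ - z₀ : ℝ):ℂ) by push_cast; ring,
      Complex.norm_real, Real.norm_eq_abs, abs_of_neg (by linarith)]
    ring
  have hnorm : ∀ ξ : ℝ, ξ < z₀ →
      ‖(f ξ:ℂ)/((ξ:ℂ) - z) - (f ξ:ℂ)/((ξ:ℂ) - (z₀:ℂ))‖
        = |f ξ| * s / (‖(ξ:ℂ) - z‖ * (z₀ - ξ)) := by
    intro ξ hξ
    rw [div_sub_div _ _ (hxz_ne ξ) (hxz₀_ne ξ hξ)]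
    have hnum : (f ξ:ℂ) * ((ξ:ℂ) - (z₀:ℂ)) - ((ξ:ℂ) - z) * (f ξ:ℂ)
        = (f ξ:ℂ) * ((s:ℂ) * Complex.exp ((φ:ℂ)*Complex.I)) := by rw [hz]; ring
    rw [hnum, norm_div, norm_mul, habs_e, norm_mul, Complex.norm_real, Real.norm_eq_abs, habs_y ξ hξ]
  -- aesm
  have hmeasz : ∀ w : ℂ, AEStronglyMeasurable (fun ξ : ℝ => (f ξ:ℂ)/((ξ:ℂ) - w))
      (volume.restrict (Set.Iio z₀)) :=
    fun w => ((Complex.measurable_ofReal.comp hfm).div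
      ((Complex.measurable_ofReal.sub measurable_const))).aestronglyMeasurable
  have hmeasz' : ∀ (S : Set ℝ) (w : ℂ), AEStronglyMeasurable (fun ξ : ℝ => (f ξ:ℂ)/((ξ:ℂ) - w))
      (volume.restrict S) :=
    fun S w => ((Complex.measurable_ofReal.comp hfm).div
      ((Complex.measurable_ofReal.sub measurable_const))).aestronglyMeasurable
  -- integrability of the two integrands
  have hgz : IntegrableOn (fun ξ : ℝ => (f ξ:ℂ)/((ξ:ℂ) - z)) (Set.Iio z₀) := by
    refine Integrable.mono' ((hfint.abs).const_mul (s*Real.sin φ)⁻¹) (hmeasz z) ?_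
    refine ae_of_all _ (fun ξ => ?_)
    rw [norm_div, Complex.norm_real, Real.norm_eq_abs]
    have h1 : 0 < s * Real.sin φ := by positivity
    have h2 := habs_low1 ξ
    rw [div_le_iff₀ (by linarith : 0 < ‖(ξ:ℂ) - z‖)]
    calc |f ξ| = (s*Real.sin φ)⁻¹ * |f ξ| * (s*Real.sin φ) := by field_simp
    _ ≤ (s*Real.sin φ)⁻¹ * |f ξ| * ‖(ξ:ℂ) - z‖ := by
        apply mul_le_mul_of_nonneg_left h2 (by positivity)
  have hg0_near : IntegrableOn (fun ξ : ℝ => (f ξ:ℂ)/((ξ:ℂ) - (z₀:ℂ)))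
      (Set.Ioo (z₀-1) z₀) := by
    refine Integrable.mono' (((show Set.Ioo (z₀-1) z₀ = Set.Ioo (z₀-(1:ℝ)) z₀ by norm_num) ▸
      intgOn_rpow_half z₀ 1 one_pos).const_mul K) (hmeasz' _ _) ?_
    rw [ae_restrict_iff' measurableSet_Ioo]
    refine ae_of_all _ (fun ξ hξ => ?_)
    rw [norm_div, Complex.norm_real, Real.norm_eq_abs, habs_y ξ hξ.2]
    have ht : 0 < z₀ - ξ := by linarith [hξ.2]
    calc |f ξ|/(z₀-ξ) ≤ (K * Real.sqrt (z₀-ξ))/(z₀-ξ) := by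
          gcongr
          exact hfb ξ hξ
    _ = K * ((z₀-ξ)^(-(1/2):ℝ)) := by rw [mul_div_assoc, sqrt_div_self_rpow _ ht]
  have hg0_far : IntegrableOn (fun ξ : ℝ => (f ξ:ℂ)/((ξ:ℂ) - (z₀:ℂ))) (Set.Iic (z₀-1)) := by
    refine Integrable.mono' (hνabs.mono_set
      (fun x hx => lt_of_le_of_lt hx (show z₀ - 1 < z₀ by linarith) : Set.Iic (z₀-1) ⊆ Set.Iio z₀))
      (hmeasz' _ _) ?_
    rw [ae_restrict_iff' measurableSet_Iic]
    refine ae_of_all _ (fun ξ hξ => ?_)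
    have hξ' : ξ < z₀ := lt_of_le_of_lt hξ (by linarith)
    rw [norm_div, Complex.norm_real, Real.norm_eq_abs, habs_y ξ hξ', hfb2 ξ hξ]
    have h1 : 1 ≤ z₀ - ξ := by
      simp only [Set.mem_Iic] at hξ; linarith
    calc |ν ξ|/(z₀-ξ) ≤ |ν ξ|/1 := by gcongr
    _ = |ν ξ| := div_one _
  have hgz₀ : IntegrableOn (fun ξ : ℝ => (f ξ:ℂ)/((ξ:ℂ) - (z₀:ℂ))) (Set.Iio z₀) := by
    rw [← Set.Iic_union_Ioo_eq_Iio (by linarith : z₀ - 1 < z₀)]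
    exact hg0_far.union hg0_near
  -- the difference decomposition
  have hlog0 : Complex.log ((z₀:ℂ) - (z₀:ℂ) + 1) = 0 := by
    norm_num
  have hsplit : β z - β (z₀:ℂ) = -(ν z₀:ℂ) * Complex.log (z - (z₀:ℂ) + 1) +
      ∫ ξ in Set.Iio z₀, ((f ξ:ℂ)/((ξ:ℂ) - z) - (f ξ:ℂ)/((ξ:ℂ) - (z₀:ℂ))) := by
    rw [hβ' z, hβ' (z₀:ℂ), integral_sub hgz hgz₀, hlog0]
    ring
  set N : ℝ → ℝ := fun ξ => ‖(f ξ:ℂ)/((ξ:ℂ)-z) - (f ξ:ℂ)/((ξ:ℂ)-(z₀:ℂ))‖ with hNdef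
  have hNint : IntegrableOn N (Set.Iio z₀) := (hgz.sub hgz₀).norm
  -- term 1 : the log
  have hT1 : ‖-(ν z₀:ℂ) * Complex.log (z - (z₀:ℂ) + 1)‖ ≤ 2*|ν z₀| * Real.sqrt s := by
    have hzz : z - (z₀:ℂ) + 1 = 1 + (s:ℂ)*Complex.exp ((φ:ℂ)*Complex.I) := by rw [hz]; ring
    have hlt : ‖(s:ℂ)*Complex.exp ((φ:ℂ)*Complex.I)‖ < 1 := by
      rw [habs_e]; linarith
    have hb := Complex.norm_log_one_add_le hlt
    rw [habs_e] at hb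
    have hinv : (1 - s)⁻¹ ≤ 2 := by
      rw [show (2:ℝ) = (1/2:ℝ)⁻¹ by norm_num]
      exact inv_anti₀ (by norm_num) (by linarith)
    have hb2 : ‖Complex.log (1 + (s:ℂ)*Complex.exp ((φ:ℂ)*Complex.I))‖ ≤ 2*s := by
      have h0 : (0:ℝ) ≤ s^2 := sq_nonneg s
      nlinarith [hb]
    rw [hzz, norm_mul]
    have : ‖-(ν z₀:ℂ)‖ = |ν z₀| := by
      rw [norm_neg, Complex.norm_real, Real.norm_eq_abs]
    rw [this]
    calc |ν z₀| * ‖Complex.log (1 + (s:ℂ)*Complex.exp ((φ:ℂ)*Complex.I))‖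
        ≤ |ν z₀| * (2*s) := by
          exact mul_le_mul_of_nonneg_left hb2 (abs_nonneg _)
    _ ≤ 2*|ν z₀| * Real.sqrt s := by nlinarith [abs_nonneg (ν z₀), hsqs]
  -- splitting the integral of N
  have hsub1 : Set.Iic (z₀-1) ⊆ Set.Iio z₀ := fun x hx => lt_of_le_of_lt hx (show z₀-1 < z₀ by linarith)
  have hsub2 : Set.Ioc (z₀-1) (z₀-s) ⊆ Set.Iio z₀ := fun x hx => lt_of_le_of_lt hx.2 (show z₀-s < z₀ by linarith)
  have hsub3 : Set.Ioo (z₀-s) z₀ ⊆ Set.Iio z₀ := fun x hx => hx.2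
  have hd1 : Disjoint (Set.Iic (z₀-1)) (Set.Ioo (z₀-1) z₀) := by
    rw [Set.disjoint_left]
    rintro x hx ⟨h1, h2⟩
    simp only [Set.mem_Iic] at hx
    linarith
  have hd2 : Disjoint (Set.Ioc (z₀-1) (z₀-s)) (Set.Ioo (z₀-s) z₀) := by
    rw [Set.disjoint_left]
    rintro x hx ⟨h1, h2⟩
    obtain ⟨_, hx2⟩ := hx
    linarith
  have hNsplit : ∫ ξ in Set.Iio z₀, N ξ =
      (∫ ξ in Set.Iic (z₀-1), N ξ) + ((∫ ξ in Set.Ioc (z₀-1) (z₀-s), N ξ) +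
        (∫ ξ in Set.Ioo (z₀-s) z₀, N ξ)) := by
    have e1 : ∫ ξ in Set.Iio z₀, N ξ =
        (∫ ξ in Set.Iic (z₀-1), N ξ) + ∫ ξ in Set.Ioo (z₀-1) z₀, N ξ := by
      rw [← Set.Iic_union_Ioo_eq_Iio (show z₀ - 1 < z₀ by linarith)]
      exact setIntegral_union hd1 measurableSet_Ioo (hNint.mono_set hsub1)
        (hNint.mono_set (fun x hx => hx.2))
    have e2 : ∫ ξ in Set.Ioo (z₀-1) z₀, N ξ =
        (∫ ξ in Set.Ioc (z₀-1) (z₀-s), N ξ) + ∫ ξ in Set.Ioo (z₀-s) z₀, N ξ := by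
      rw [← Set.Ioc_union_Ioo_eq_Ioo (show z₀-1 ≤ z₀-s by linarith) (show z₀-s < z₀ by linarith)]
      exact setIntegral_union hd2 measurableSet_Ioo (hNint.mono_set hsub2)
        (hNint.mono_set hsub3)
    rw [e1, e2]
  -- piece 1
  have hP1 : (∫ ξ in Set.Iic (z₀-1), N ξ) ≤ 2*I₁*Real.sqrt s := by
    have hb : ∀ ξ ∈ Set.Iic (z₀-1), N ξ ≤ (2*s) * |ν ξ| := by
      intro ξ hξ
      simp only [Set.mem_Iic] at hξ
      have hξ' : ξ < z₀ := by linarith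
      rw [hNdef]
      beta_reduce
      rw [hnorm ξ hξ', hfb2 ξ hξ]
      have hre : ((ξ:ℂ) - z).re = ξ - (z₀ + s * Real.cos φ) := by
        simp [Complex.sub_re, hzre]
      have hcb : s * Real.cos φ ≤ s := by nlinarith
      have hcb2 : -s ≤ s * Real.cos φ := by nlinarith
      have h2 : (1:ℝ)/2 ≤ |((ξ:ℂ)-z).re| := by
        rw [hre, abs_of_nonpos (by linarith)]
        linarith
      have habsx : (1:ℝ)/2 ≤ ‖(ξ:ℂ) - z‖ :=
        le_trans h2 (Complex.abs_re_le_norm _)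
      have h1 : 1 ≤ z₀ - ξ := by linarith
      calc |ν ξ| * s / (‖(ξ:ℂ) - z‖ * (z₀ - ξ))
          ≤ |ν ξ| * s / (1/2 * 1) := by
            apply div_le_div₀ (by positivity) le_rfl (by norm_num)
            nlinarith
      _ = (2*s) * |ν ξ| := by ring
    calc (∫ ξ in Set.Iic (z₀-1), N ξ) ≤ ∫ ξ in Set.Iic (z₀-1), (2*s) * |ν ξ| :=
          setIntegral_mono_on (hNint.mono_set hsub1)
            ((hνabs.mono_set hsub1).const_mul _) measurableSet_Iic hb
    _ = (2*s) * I₁ := by rw [MeasureTheory.integral_const_mul]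
    _ ≤ 2*I₁*Real.sqrt s := by nlinarith
  -- piece 2
  have hP2 : (∫ ξ in Set.Ioc (z₀-1) (z₀-s), N ξ) ≤ 4*K/(1+Real.cos φ) * Real.sqrt s := by
    have hb : ∀ ξ ∈ Set.Ioc (z₀-1) (z₀-s), N ξ ≤
        (2*K*s/(1+Real.cos φ)) * (z₀-ξ)^(-(3/2):ℝ) := by
      intro ξ hξ
      obtain ⟨hξ1, hξ2⟩ := hξ
      have hts : s ≤ z₀ - ξ := by linarith
      have ht : 0 < z₀ - ξ := by linarith
      have hξ' : ξ < z₀ := by linarith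
      have hξmem : ξ ∈ Set.Ioo (z₀-1) z₀ := ⟨hξ1, hξ'⟩
      rw [hNdef]
      beta_reduce
      rw [hnorm ξ hξ']
      have hre : ((ξ:ℂ) - z).re = ξ - (z₀ + s * Real.cos φ) := by
        simp [Complex.sub_re, hzre]
      have hkey : (z₀-ξ)*(1+Real.cos φ)/2 ≤ z₀ + s*Real.cos φ - ξ := by
        rcases le_or_gt 0 (Real.cos φ) with h|h
        · nlinarith
        · nlinarith
      have habsx : (z₀-ξ)*(1+Real.cos φ)/2 ≤ ‖(ξ:ℂ) - z‖ := by
        have h3 : z₀ + s*Real.cos φ - ξ = -(((ξ:ℂ) - z).re) := by rw [hre]; ring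
        have h4 : -(((ξ:ℂ) - z).re) ≤ |((ξ:ℂ) - z).re| := neg_le_abs _
        calc (z₀-ξ)*(1+Real.cos φ)/2 ≤ -(((ξ:ℂ) - z).re) := by rw [← h3]; exact hkey
        _ ≤ |((ξ:ℂ) - z).re| := h4
        _ ≤ ‖(ξ:ℂ) - z‖ := Complex.abs_re_le_norm _
      have hpos : (0:ℝ) < (z₀-ξ)*(1+Real.cos φ)/2 := by positivity
      calc |f ξ| * s / (‖(ξ:ℂ) - z‖ * (z₀ - ξ))
          ≤ (K * Real.sqrt (z₀-ξ)) * s / (((z₀-ξ)*(1+Real.cos φ)/2) * (z₀ - ξ)) := by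
            apply div_le_div₀ (by positivity)
              (mul_le_mul_of_nonneg_right (hfb ξ hξmem) hs.le) (by positivity)
            exact mul_le_mul_of_nonneg_right habsx ht.le
      _ = (2*K*s/(1+Real.cos φ)) * (Real.sqrt (z₀-ξ)/((z₀-ξ)*(z₀-ξ))) := by
            field_simp
      _ = (2*K*s/(1+Real.cos φ)) * (z₀-ξ)^(-(3/2):ℝ) := by
            rw [sqrt_div_sq_rpow _ ht]
    have hc2 : (0:ℝ) ≤ 2*K*s/(1+Real.cos φ) := by positivity
    calc (∫ ξ in Set.Ioc (z₀-1) (z₀-s), N ξ)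
        ≤ ∫ ξ in Set.Ioc (z₀-1) (z₀-s), (2*K*s/(1+Real.cos φ)) * (z₀-ξ)^(-(3/2):ℝ) :=
          setIntegral_mono_on (hNint.mono_set hsub2)
            ((intgOn_rpow_3half z₀ s hs (by linarith)).const_mul _) measurableSet_Ioc hb
    _ = (2*K*s/(1+Real.cos φ)) * ∫ ξ in Set.Ioc (z₀-1) (z₀-s), (z₀-ξ)^(-(3/2):ℝ) := by
          rw [MeasureTheory.integral_const_mul]
    _ ≤ (2*K*s/(1+Real.cos φ)) * (2/Real.sqrt s) :=
          mul_le_mul_of_nonneg_left (rpow_int_3half z₀ s hs (by linarith)) hc2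
    _ = 4*K/(1+Real.cos φ) * Real.sqrt s := by
          have hms := Real.sq_sqrt hs.le
          field_simp
          linear_combination (-(4*K))*hms
  -- piece 3
  have hP3 : (∫ ξ in Set.Ioo (z₀-s) z₀, N ξ) ≤ 2*K/Real.sin φ * Real.sqrt s := by
    have hb : ∀ ξ ∈ Set.Ioo (z₀-s) z₀, N ξ ≤ (K/Real.sin φ) * (z₀-ξ)^(-(1/2):ℝ) := by
      intro ξ hξ
      obtain ⟨hξ1, hξ2⟩ := hξ
      have ht : 0 < z₀ - ξ := by linarith
      have hξmem : ξ ∈ Set.Ioo (z₀-1) z₀ := ⟨by linarith, hξ2⟩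
      rw [hNdef]
      beta_reduce
      rw [hnorm ξ hξ2]
      have h1 : 0 < s * Real.sin φ := by positivity
      calc |f ξ| * s / (‖(ξ:ℂ) - z‖ * (z₀ - ξ))
          ≤ (K * Real.sqrt (z₀-ξ)) * s / ((s * Real.sin φ) * (z₀ - ξ)) := by
            apply div_le_div₀ (by positivity)
              (mul_le_mul_of_nonneg_right (hfb ξ hξmem) hs.le) (by positivity)
            exact mul_le_mul_of_nonneg_right (habs_low1 ξ) ht.le
      _ = (K/Real.sin φ) * (Real.sqrt (z₀-ξ)/(z₀-ξ)) := by
            field_simp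
      _ = (K/Real.sin φ) * (z₀-ξ)^(-(1/2):ℝ) := by
            rw [sqrt_div_self_rpow _ ht]
    calc (∫ ξ in Set.Ioo (z₀-s) z₀, N ξ)
        ≤ ∫ ξ in Set.Ioo (z₀-s) z₀, (K/Real.sin φ) * (z₀-ξ)^(-(1/2):ℝ) :=
          setIntegral_mono_on (hNint.mono_set hsub3)
            ((intgOn_rpow_half z₀ s hs).const_mul _) measurableSet_Ioo hb
    _ = (K/Real.sin φ) * ∫ ξ in Set.Ioo (z₀-s) z₀, (z₀-ξ)^(-(1/2):ℝ) := by
          rw [MeasureTheory.integral_const_mul]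
    _ = (K/Real.sin φ) * (2 * Real.sqrt s) := by rw [rpow_int_half z₀ s hs]
    _ = 2*K/Real.sin φ * Real.sqrt s := by ring
  -- assemble
  rw [hsplit]
  have hIN : ‖∫ ξ in Set.Iio z₀,
      ((f ξ:ℂ)/((ξ:ℂ) - z) - (f ξ:ℂ)/((ξ:ℂ) - (z₀:ℂ)))‖ ≤ ∫ ξ in Set.Iio z₀, N ξ := by
    exact norm_integral_le_integral_norm _
  calc ‖-(ν z₀:ℂ) * Complex.log (z - (z₀:ℂ) + 1) +
      ∫ ξ in Set.Iio z₀, ((f ξ:ℂ)/((ξ:ℂ) - z) - (f ξ:ℂ)/((ξ:ℂ) - (z₀:ℂ)))‖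
      ≤ ‖-(ν z₀:ℂ) * Complex.log (z - (z₀:ℂ) + 1)‖ +
        ‖∫ ξ in Set.Iio z₀,
          ((f ξ:ℂ)/((ξ:ℂ) - z) - (f ξ:ℂ)/((ξ:ℂ) - (z₀:ℂ)))‖ := norm_add_le _ _
  _ ≤ 2*|ν z₀| * Real.sqrt s + ∫ ξ in Set.Iio z₀, N ξ := add_le_add hT1 hIN
  _ ≤ 2*|ν z₀| * Real.sqrt s + (2*I₁*Real.sqrt s +
      (4*K/(1+Real.cos φ) * Real.sqrt s + 2*K/Real.sin φ * Real.sqrt s)) := by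
      rw [hNsplit]
      exact add_le_add_right (add_le_add hP1 (add_le_add hP2 hP3)) _
  _ ≤ C * Real.sqrt s := by
      rw [hC]
      nlinarith [hsq0]
end

section
/- Let x < z₀ and assume ρ is continuous at x. Then the jump relation δ₊(x) = δ₋(x)(1 − ρ(x)) holds in the sense of limits: the ratio δ(x + iε)/δ(x − iε) tends to 1 − ρ(x) as ε → 0 from the right. -/
open MeasureTheory

private lemma pointwise_id (ε ξ x ν : ℝ) (hε : 0 < ε) :
    Complex.I * ((ν:ℂ)/((ξ:ℂ) - ((x:ℂ) + Complex.I * ε)) - (ν:ℂ)/((ξ:ℂ) - ((x:ℂ) - Complex.I * ε)))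
      = ((-(2*Real.pi) * ((ε / (Real.pi * ((ξ - x)^2 + ε^2))) * ν) : ℝ) : ℂ) := by
  have hπ := Real.pi_ne_zero
  have hd : ((ξ - x)^2 + ε^2) ≠ 0 := by positivity
  have hr : (-(2*Real.pi) * ((ε / (Real.pi * ((ξ - x)^2 + ε^2))) * ν) : ℝ)
      = (-2*ε*ν) / ((ξ - x)^2 + ε^2) := by field_simp
  rw [hr]
  have hA : (ξ:ℂ) - ((x:ℂ) + Complex.I * ε) ≠ 0 := by
    intro h; have := congrArg Complex.im h; simp at this; linarith
  have hB : (ξ:ℂ) - ((x:ℂ) - Complex.I * ε) ≠ 0 := by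
    intro h; have := congrArg Complex.im h; simp at this; linarith
  have hAB : ((ξ:ℂ) - ((x:ℂ) + Complex.I * ε)) * ((ξ:ℂ) - ((x:ℂ) - Complex.I * ε))
      = ((((ξ - x)^2 + ε^2 : ℝ)) : ℂ) := by
    push_cast; ring_nf; rw [Complex.I_sq]; ring
  have hdc : ((((ξ - x)^2 + ε^2 : ℝ)) : ℂ) ≠ 0 := by exact_mod_cast hd
  rw [div_sub_div _ _ hA hB, hAB]
  push_cast
  field_simp
  ring_nf
  rw [Complex.I_sq]
  ring

/-- integrability of the complex integrand when Im z ≠ 0 -/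
private lemma integrable_complex (z₀ : ℝ) (ν : ℝ → ℝ) (hνm : Measurable ν)
    (hνint : IntegrableOn ν (Set.Iio z₀)) (z : ℂ) (hz : z.im ≠ 0) :
    IntegrableOn (fun ξ : ℝ => (ν ξ : ℂ) / ((ξ : ℂ) - z)) (Set.Iio z₀) := by
  have hm : AEStronglyMeasurable (fun ξ : ℝ => (ν ξ : ℂ) / ((ξ : ℂ) - z))
      (volume.restrict (Set.Iio z₀)) := by
    apply Measurable.aestronglyMeasurable
    exact (Complex.measurable_ofReal.comp hνm).div
      ((Complex.measurable_ofReal.sub measurable_const))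
  refine Integrable.mono' ((hνint.norm).mul_const |z.im|⁻¹) hm ?_
  filter_upwards with ξ
  rw [norm_div, Complex.norm_real]
  rw [div_eq_mul_inv]
  gcongr ?_ * ?_
  · apply inv_anti₀ (abs_pos.2 hz)
    calc |z.im| = |((ξ:ℂ) - z).im| := by simp
    _ ≤ ‖(ξ:ℂ) - z‖ := Complex.abs_im_le_norm _
    _ = ‖(ξ:ℂ) - z‖ := rfl


private lemma phi_cont (x ε : ℝ) (hε : 0 < ε) :
    Continuous (fun ξ : ℝ => ε / (Real.pi * ((ξ - x)^2 + ε^2))) := by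
  apply continuous_const.div
  · exact continuous_const.mul
      ((((continuous_id.sub continuous_const).pow 2).add continuous_const))
  · intro ξ
    have : 0 < Real.pi * ((ξ - x)^2 + ε^2) := by positivity
    exact this.ne'

private lemma poisson_integral (x a b ε : ℝ) (hab : a ≤ b) (hε : 0 < ε) :
    ∫ ξ in Set.Ioo a b, ε / (Real.pi * ((ξ - x)^2 + ε^2))
      = (1/Real.pi) * (Real.arctan ((b - x)/ε) - Real.arctan ((a - x)/ε)) := by
  have hderiv : ∀ ξ ∈ Set.uIcc a b,
      HasDerivAt (fun y => (1/Real.pi) * Real.arctan ((y - x)/ε))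
        (ε / (Real.pi * ((ξ - x)^2 + ε^2))) ξ := by
    intro ξ _
    have h1 : HasDerivAt (fun y : ℝ => (y - x)/ε) (1/ε) ξ := by
      simpa using ((hasDerivAt_id ξ).sub_const x).div_const ε
    have h2 := (Real.hasDerivAt_arctan ((ξ - x)/ε)).comp ξ h1
    have h3 := h2.const_mul (1/Real.pi)
    refine h3.congr_deriv ?_
    have hd : (0:ℝ) < 1 + ((ξ - x)/ε)^2 := by positivity
    have hπ := Real.pi_pos
    field_simp
    ring
  have hii : IntervalIntegrable (fun ξ => ε / (Real.pi * ((ξ - x)^2 + ε^2))) volume a b :=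
    (phi_cont x ε hε).intervalIntegrable _ _
  have hftc := intervalIntegral.integral_eq_sub_of_hasDerivAt hderiv hii
  rw [intervalIntegral.integral_of_le hab, integral_Ioc_eq_integral_Ioo] at hftc
  rw [hftc]
  ring

private lemma poisson_unif (x z₀ : ℝ) :
    ∀ u : Set ℝ, IsOpen u → x ∈ u →
      TendstoUniformlyOn (fun ε ξ => ε / (Real.pi * ((ξ - x)^2 + ε^2))) 0
        (nhdsWithin 0 (Set.Ioi 0)) (Set.Iio z₀ \ u) := by
  intro u hu hxu
  obtain ⟨r, hr, hball⟩ := Metric.isOpen_iff.1 hu x hxu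
  rw [Metric.tendstoUniformlyOn_iff]
  intro η hη
  have hrpos : 0 < Real.pi * r^2 := by positivity
  have hpos : (0:ℝ) < η * (Real.pi * r^2) := by positivity
  filter_upwards [Ioo_mem_nhdsGT_of_mem (Set.left_mem_Ico.2 hpos)] with ε hε ξ hξ
  have hε0 : 0 < ε := hε.1
  have h1 : r ≤ |ξ - x| := by
    by_contra h
    push_neg at h
    exact hξ.2 (hball (by rwa [Metric.mem_ball, Real.dist_eq]))
  have h2 : r^2 ≤ (ξ - x)^2 := by
    calc r^2 ≤ |ξ - x|^2 := by nlinarith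
    _ = (ξ - x)^2 := sq_abs _
  have hφle : ε / (Real.pi * ((ξ - x)^2 + ε^2)) ≤ ε / (Real.pi * r^2) := by
    have hbc : Real.pi * r^2 ≤ Real.pi * ((ξ - x)^2 + ε^2) := by
      have h3 : r^2 ≤ (ξ - x)^2 + ε^2 := by nlinarith
      exact mul_le_mul_of_nonneg_left h3 Real.pi_pos.le
    exact div_le_div_of_nonneg_left hε0.le hrpos hbc
  have hφnn : 0 ≤ ε / (Real.pi * ((ξ - x)^2 + ε^2)) := by
    have : 0 < Real.pi * ((ξ - x)^2 + ε^2) := by positivity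
    positivity
  have hlt : ε / (Real.pi * r^2) < η := by
    rw [div_lt_iff₀ hrpos]
    exact hε.2
  rw [Real.dist_eq, abs_of_nonpos (by simpa using hφnn)]
  simpa using lt_of_le_of_lt hφle hlt

private lemma arctan_div_top (κ : ℝ) (hκ : 0 < κ) :
    Filter.Tendsto (fun ε : ℝ => Real.arctan (κ/ε))
      (nhdsWithin 0 (Set.Ioi 0)) (nhds (Real.pi/2)) := by
  have hA' : Filter.Tendsto (fun ε : ℝ => κ/ε) (nhdsWithin 0 (Set.Ioi 0)) Filter.atTop := by
    have h := Filter.Tendsto.const_mul_atTop hκ tendsto_inv_nhdsGT_zero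
    simpa [div_eq_mul_inv] using h
  exact (Real.tendsto_arctan_atTop.mono_right nhdsWithin_le_nhds).comp hA'

private lemma arctan_div_bot (κ : ℝ) (hκ : κ < 0) :
    Filter.Tendsto (fun ε : ℝ => Real.arctan (κ/ε))
      (nhdsWithin 0 (Set.Ioi 0)) (nhds (-(Real.pi/2))) := by
  have hA' : Filter.Tendsto (fun ε : ℝ => κ/ε) (nhdsWithin 0 (Set.Ioi 0)) Filter.atBot := by
    have h := Filter.Tendsto.const_mul_atTop (show 0 < -κ by linarith) tendsto_inv_nhdsGT_zero
    have h2 := Filter.tendsto_neg_atBot_iff.2 h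
    have heq : (fun ε : ℝ => κ/ε) = fun ε : ℝ => -((-κ) * ε⁻¹) := by
      funext ε
      field_simp
    rw [heq]
    exact h2
  exact (Real.tendsto_arctan_atBot.mono_right nhdsWithin_le_nhds).comp hA'

private lemma poisson_total (x z₀ : ℝ) (hx : x < z₀) :
    Filter.Tendsto
      (fun ε : ℝ => ∫ ξ in Set.Ioo (x-1) ((x+z₀)/2), ε / (Real.pi * ((ξ - x)^2 + ε^2)))
      (nhdsWithin 0 (Set.Ioi 0)) (nhds 1) := by
  have hA := arctan_div_top ((x + z₀)/2 - x) (by linarith)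
  have hB := arctan_div_bot ((x-1) - x) (by linarith)
  have hlim := ((hA.sub hB).const_mul (1/Real.pi))
  have heq1 : (1/Real.pi) * (Real.pi/2 - -(Real.pi/2)) = 1 := by
    field_simp
    norm_num
  rw [heq1] at hlim
  apply hlim.congr'
  filter_upwards [self_mem_nhdsWithin] with ε (hε : 0 < ε)
  rw [poisson_integral x (x-1) ((x+z₀)/2) ε (by linarith) hε]

private lemma poisson_peak (x z₀ : ℝ) (hx : x < z₀) (ν : ℝ → ℝ)
    (hνint : IntegrableOn ν (Set.Iio z₀)) (hνcont : ContinuousAt ν x) :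
    Filter.Tendsto
      (fun ε : ℝ => ∫ ξ in Set.Iio z₀, (ε / (Real.pi * ((ξ - x)^2 + ε^2))) • ν ξ)
      (nhdsWithin 0 (Set.Ioi 0)) (nhds (ν x)) := by
  have hxz : x < (x + z₀)/2 := by linarith
  have hmz : (x + z₀)/2 < z₀ := by linarith
  have hts : Set.Ioo (x-1) ((x+z₀)/2) ⊆ Set.Iio z₀ := fun y hy => lt_trans hy.2 hmz
  have hxt : x ∈ Set.Ioo (x-1) ((x+z₀)/2) := ⟨by linarith, hxz⟩
  have hnφ : ∀ᶠ ε : ℝ in nhdsWithin 0 (Set.Ioi 0),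
      ∀ ξ ∈ Set.Iio z₀, 0 ≤ ε / (Real.pi * ((ξ - x)^2 + ε^2)) := by
    filter_upwards [self_mem_nhdsWithin] with ε (hε : 0 < ε) ξ _
    have : 0 < Real.pi * ((ξ - x)^2 + ε^2) := by positivity
    positivity
  have h'iφ : ∀ᶠ ε : ℝ in nhdsWithin 0 (Set.Ioi 0),
      AEStronglyMeasurable (fun ξ => ε / (Real.pi * ((ξ - x)^2 + ε^2)))
        (volume.restrict (Set.Iio z₀)) := by
    filter_upwards [self_mem_nhdsWithin] with ε (hε : 0 < ε)
    exact (phi_cont x ε hε).aestronglyMeasurable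
  exact tendsto_setIntegral_peak_smul_of_integrableOn_of_tendsto
    measurableSet_Iio measurableSet_Ioo hts
    (mem_nhdsWithin_of_mem_nhds (isOpen_Ioo.mem_nhds hxt))
    (by simp [measure_Ioo_lt_top.ne]) hnφ (poisson_unif x z₀) (poisson_total x z₀ hx) h'iφ
    hνint hνcont.continuousWithinAt

/-- The jump relation δ₊(x) = δ₋(x)(1 − ρ(x)) on (−∞, z₀), in the sense that
δ(x+iε)/δ(x−iε) → 1 − ρ(x) as ε → 0⁺. -/
theorem delta_jump_relation
    (c : ℝ) (hc0 : 0 ≤ c) (hc1 : c < 1) (z₀ : ℝ)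
    (ρ : ℝ → ℝ) (hρm : Measurable ρ)
    (hρ : ∀ ξ : ℝ, 0 ≤ ρ ξ ∧ ρ ξ ≤ c)
    (hint : IntegrableOn (fun ξ : ℝ => Real.log (1 - ρ ξ)) (Set.Iio z₀))
    (ν : ℝ → ℝ) (hν : ∀ ξ : ℝ, ν ξ = -(1 / (2 * Real.pi)) * Real.log (1 - ρ ξ))
    (δ : ℂ → ℂ)
    (hδ : ∀ z : ℂ, δ z =
      Complex.exp (Complex.I * ∫ ξ in Set.Iio z₀, (ν ξ : ℂ) / ((ξ : ℂ) - z)))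
    (x : ℝ) (hx : x < z₀) (hcont : ContinuousAt ρ x) :
    Filter.Tendsto
      (fun ε : ℝ => δ ((x : ℂ) + Complex.I * (ε : ℂ)) / δ ((x : ℂ) - Complex.I * (ε : ℂ)))
      (nhdsWithin 0 (Set.Ioi 0)) (nhds ((1 - ρ x : ℝ) : ℂ)) := by
  have hπ : (0:ℝ) < Real.pi := Real.pi_pos
  have hνeq : ν = fun ξ => -(1 / (2 * Real.pi)) * Real.log (1 - ρ ξ) := funext hν
  have hρx : (0:ℝ) < 1 - ρ x := by have := (hρ x).2; linarith
  have hνm : Measurable ν := by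
    rw [hνeq]
    exact (Real.measurable_log.comp ((measurable_const.sub hρm))).const_mul _
  have hνint : IntegrableOn ν (Set.Iio z₀) := by
    rw [hνeq]; exact hint.const_mul _
  have hνcont : ContinuousAt ν x := by
    rw [hνeq]
    have h1 : ContinuousAt (fun y => 1 - ρ y) x := continuousAt_const.sub hcont
    have h2 : ContinuousAt (fun y => Real.log (1 - ρ y)) x := h1.log hρx.ne'
    exact h2.const_mul _
  set φ : ℝ → ℝ → ℝ := fun ε ξ => ε / (Real.pi * ((ξ - x)^2 + ε^2)) with hφ
  -- the peak-function limit
  have hpeak : Filter.Tendsto (fun ε : ℝ => ∫ ξ in Set.Iio z₀, φ ε ξ • ν ξ)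
      (nhdsWithin 0 (Set.Ioi 0)) (nhds (ν x)) :=
    poisson_peak x z₀ hx ν hνint hνcont
  -- the exponent tends to log (1 - ρ x)
  have hexp : Filter.Tendsto (fun ε : ℝ => -(2*Real.pi) * ∫ ξ in Set.Iio z₀, φ ε ξ • ν ξ)
      (nhdsWithin 0 (Set.Ioi 0)) (nhds (Real.log (1 - ρ x))) := by
    have h2 : -(2*Real.pi) * ν x = Real.log (1 - ρ x) := by
      rw [hν]; field_simp
    rw [← h2]
    exact (hpeak.const_mul _)
  -- combine
  have hfinal : Filter.Tendsto
      (fun ε : ℝ => Complex.exp (((-(2*Real.pi) * ∫ ξ in Set.Iio z₀, φ ε ξ • ν ξ : ℝ)) : ℂ))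
      (nhdsWithin 0 (Set.Ioi 0)) (nhds ((1 - ρ x : ℝ) : ℂ)) := by
    have : Filter.Tendsto (fun r : ℝ => Complex.exp ((r : ℂ))) (nhds (Real.log (1 - ρ x)))
        (nhds ((1 - ρ x : ℝ) : ℂ)) := by
      have hc : Continuous (fun r : ℝ => Complex.exp ((r : ℂ))) :=
        Complex.continuous_exp.comp Complex.continuous_ofReal
      have := hc.continuousAt (x := Real.log (1 - ρ x))
      rw [ContinuousAt, ← Complex.ofReal_exp, Real.exp_log hρx] at this
      exact this
    exact this.comp hexp
  refine hfinal.congr' ?_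
  filter_upwards [self_mem_nhdsWithin] with ε (hε : 0 < ε)
  -- equality of the ratio with the exponential for fixed ε > 0
  have hf : IntegrableOn (fun ξ : ℝ => (ν ξ : ℂ) / ((ξ : ℂ) - ((x:ℂ) + Complex.I * ε)))
      (Set.Iio z₀) := by
    apply integrable_complex z₀ ν hνm hνint
    simp [hε.ne']
  have hg : IntegrableOn (fun ξ : ℝ => (ν ξ : ℂ) / ((ξ : ℂ) - ((x:ℂ) - Complex.I * ε)))
      (Set.Iio z₀) := by
    apply integrable_complex z₀ ν hνm hνint
    simp [hε.ne']
  have hpt : ∀ ξ : ℝ,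
      Complex.I * ((ν ξ:ℂ)/((ξ:ℂ) - ((x:ℂ) + Complex.I * ε)) - (ν ξ:ℂ)/((ξ:ℂ) - ((x:ℂ) - Complex.I * ε)))
      = ((-(2*Real.pi) * (φ ε ξ * ν ξ) : ℝ) : ℂ) := fun ξ => pointwise_id ε ξ x (ν ξ) hε
  have key : Complex.I * ∫ ξ in Set.Iio z₀,
        ((ν ξ:ℂ)/((ξ:ℂ) - ((x:ℂ) + Complex.I * ε)) - (ν ξ:ℂ)/((ξ:ℂ) - ((x:ℂ) - Complex.I * ε)))
      = (((-(2*Real.pi) * ∫ ξ in Set.Iio z₀, φ ε ξ • ν ξ : ℝ)) : ℂ) := by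
    rw [← integral_const_mul]
    rw [MeasureTheory.integral_congr_ae (Filter.Eventually.of_forall fun ξ => hpt ξ)]
    have : (∫ ξ in Set.Iio z₀, ((-(2*Real.pi) * (φ ε ξ * ν ξ) : ℝ) : ℂ))
        = (((∫ ξ in Set.Iio z₀, -(2*Real.pi) * (φ ε ξ * ν ξ) : ℝ)) : ℂ) := integral_ofReal
    rw [this]
    norm_cast
    rw [← integral_const_mul]
    simp [smul_eq_mul]
  rw [hδ, hδ, ← Complex.exp_sub, ← mul_sub, ← integral_sub hf hg, key]
end

section
/- There exists a constant C > 0 such that for every t > 0 and every τ ∈ ℝ, ∫_{0}^{∞} e^{−4 t v²} |v − τ|^{−1/2} dv ≤ C t^{−1/4}. -/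
open MeasureTheory

lemma rpow_half_intint (r : ℝ) :
    IntervalIntegrable (fun x : ℝ => x ^ (-(1:ℝ)/2)) volume 0 r := by
  have : -(1:ℝ) < -(1:ℝ)/2 := by norm_num
  simpa using intervalIntegral.intervalIntegrable_rpow' this (a := 0) (b := r)

lemma rpow_half_integral {r : ℝ} (hr : 0 ≤ r) :
    ∫ x in (0:ℝ)..r, x ^ (-(1:ℝ)/2) = 2 * Real.sqrt r := by
  rw [integral_rpow (Or.inl (by norm_num))]
  have h1 : -(1:ℝ)/2 + 1 = 1/2 := by norm_num
  rw [h1, Real.zero_rpow (by norm_num), ← Real.sqrt_eq_rpow]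
  ring

lemma near_right (τ r : ℝ) (hr : 0 < r) :
    ∫⁻ v in Set.Ioc τ (τ + r), ENNReal.ofReal (|v - τ| ^ (-(1:ℝ)/2))
      = ENNReal.ofReal (2 * Real.sqrt r) := by
  have hcong : ∫⁻ v in Set.Ioc τ (τ + r), ENNReal.ofReal (|v - τ| ^ (-(1:ℝ)/2))
      = ∫⁻ v in Set.Ioc τ (τ + r), ENNReal.ofReal ((v - τ) ^ (-(1:ℝ)/2)) := by
    apply setLIntegral_congr_fun measurableSet_Ioc
    intro v hv; dsimp only
    rw [abs_of_nonneg (by linarith [hv.1])]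
  rw [hcong]
  have hii : IntervalIntegrable (fun v : ℝ => (v - τ) ^ (-(1:ℝ)/2)) volume τ (τ + r) := by
    simpa [add_comm] using (rpow_half_intint r).comp_sub_right τ
  have hint : IntegrableOn (fun v : ℝ => (v - τ) ^ (-(1:ℝ)/2)) (Set.Ioc τ (τ + r)) :=
    (intervalIntegrable_iff_integrableOn_Ioc_of_le (by linarith)).mp hii
  rw [← ofReal_integral_eq_lintegral_ofReal hint]
  · congr 1
    rw [← intervalIntegral.integral_of_le (by linarith)]
    rw [show (∫ v in τ..(τ + r), (v - τ) ^ (-(1:ℝ)/2))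
        = ∫ v in (τ - τ)..(τ + r - τ), v ^ (-(1:ℝ)/2) from
      intervalIntegral.integral_comp_sub_right (fun v => v ^ (-(1:ℝ)/2)) τ]
    simpa using rpow_half_integral hr.le
  · filter_upwards [ae_restrict_mem measurableSet_Ioc] with v hv
    exact Real.rpow_nonneg (by linarith [hv.1]) _

lemma near_left (τ r : ℝ) (hr : 0 < r) :
    ∫⁻ v in Set.Icc (τ - r) τ, ENNReal.ofReal (|v - τ| ^ (-(1:ℝ)/2))
      = ENNReal.ofReal (2 * Real.sqrt r) := by
  rw [← Measure.restrict_congr_set MeasureTheory.Ioc_ae_eq_Icc]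
  have hcong : ∫⁻ v in Set.Ioc (τ - r) τ, ENNReal.ofReal (|v - τ| ^ (-(1:ℝ)/2))
      = ∫⁻ v in Set.Ioc (τ - r) τ, ENNReal.ofReal ((τ - v) ^ (-(1:ℝ)/2)) := by
    apply setLIntegral_congr_fun measurableSet_Ioc
    intro v hv; dsimp only
    rw [abs_sub_comm, abs_of_nonneg (by linarith [hv.2])]
  rw [hcong]
  have hii : IntervalIntegrable (fun v : ℝ => (τ - v) ^ (-(1:ℝ)/2)) volume (τ - r) τ := by
    have := (rpow_half_intint r).comp_sub_left τ
    simpa using this.symm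
  have hint : IntegrableOn (fun v : ℝ => (τ - v) ^ (-(1:ℝ)/2)) (Set.Ioc (τ - r) τ) :=
    (intervalIntegrable_iff_integrableOn_Ioc_of_le (by linarith)).mp hii
  rw [← ofReal_integral_eq_lintegral_ofReal hint]
  · congr 1
    rw [← intervalIntegral.integral_of_le (by linarith)]
    rw [show (∫ v in (τ - r)..τ, (τ - v) ^ (-(1:ℝ)/2))
        = ∫ v in (τ - τ)..(τ - (τ - r)), v ^ (-(1:ℝ)/2) from
      intervalIntegral.integral_comp_sub_left (fun v => v ^ (-(1:ℝ)/2)) τ]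
    simpa using rpow_half_integral hr.le
  · filter_upwards [ae_restrict_mem measurableSet_Ioc] with v hv
    exact Real.rpow_nonneg (by linarith [hv.2]) _

lemma near_total (τ r : ℝ) (hr : 0 < r) :
    ∫⁻ v in Set.Icc (τ - r) (τ + r), ENNReal.ofReal (|v - τ| ^ (-(1:ℝ)/2))
      ≤ ENNReal.ofReal (4 * Real.sqrt r) := by
  have hsplit : Set.Icc (τ - r) (τ + r) = Set.Icc (τ - r) τ ∪ Set.Ioc τ (τ + r) :=
    (Set.Icc_union_Ioc_eq_Icc (by linarith) (by linarith)).symm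
  rw [hsplit, lintegral_union measurableSet_Ioc
    (Set.disjoint_left.mpr fun v hv hv' => absurd hv.2 (not_le.mpr hv'.1)),
    near_left τ r hr, near_right τ r hr, ← ENNReal.ofReal_add (by positivity) (by positivity)]
  apply ENNReal.ofReal_le_ofReal
  nlinarith [Real.sqrt_nonneg r]

/-- Scalar inequality from the proof of Proposition 7.1:
∫₀^∞ e^{−4tv²} |v−τ|^{−1/2} dv ≤ C t^{−1/4}, uniformly in τ ∈ ℝ. -/
theorem scalar_estimate_I1 :
    ∃ C > (0:ℝ), ∀ t : ℝ, 0 < t → ∀ τ : ℝ,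
      ∫⁻ v in Set.Ioi (0:ℝ),
          ENNReal.ofReal (Real.exp (-4 * t * v ^ 2) * |v - τ| ^ (-(1:ℝ) / 2))
        ≤ ENNReal.ofReal (C * t ^ (-(1:ℝ) / 4)) := by
  refine ⟨5, by norm_num, fun t ht τ => ?_⟩
  set r : ℝ := t ^ (-(1:ℝ)/2) with hrdef
  have hr : 0 < r := Real.rpow_pos_of_pos ht _
  -- the two majorants
  set g : ℝ → ENNReal := (Set.Icc (τ - r) (τ + r)).indicator
    (fun v => ENNReal.ofReal (|v - τ| ^ (-(1:ℝ)/2))) with hgdef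
  set h : ℝ → ENNReal := fun v => ENNReal.ofReal (r ^ (-(1:ℝ)/2) * Real.exp (-4 * t * v ^ 2))
    with hhdef
  have hpt : ∀ v : ℝ, ENNReal.ofReal (Real.exp (-4 * t * v ^ 2) * |v - τ| ^ (-(1:ℝ)/2))
      ≤ g v + h v := by
    intro v
    by_cases hv : v ∈ Set.Icc (τ - r) (τ + r)
    · refine le_trans ?_ le_self_add
      rw [hgdef, Set.indicator_of_mem hv]
      apply ENNReal.ofReal_le_ofReal
      calc Real.exp (-4 * t * v ^ 2) * |v - τ| ^ (-(1:ℝ)/2)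
          ≤ 1 * |v - τ| ^ (-(1:ℝ)/2) := by
            apply mul_le_mul_of_nonneg_right _ (Real.rpow_nonneg (abs_nonneg _) _)
            exact Real.exp_le_one_iff.mpr (by nlinarith)
        _ = |v - τ| ^ (-(1:ℝ)/2) := one_mul _
    · refine le_trans ?_ le_add_self
      apply ENNReal.ofReal_le_ofReal
      rw [mul_comm]
      apply mul_le_mul_of_nonneg_right _ (Real.exp_nonneg _)
      apply Real.rpow_le_rpow_of_nonpos hr _ (by norm_num)
      simp only [Set.mem_Icc, not_and_or, not_le] at hv
      rcases hv with hv | hv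
      · rw [abs_sub_comm, abs_of_nonneg (by linarith)]; linarith
      · rw [abs_of_nonneg (by linarith)]; linarith
  have hgmeas : Measurable g := by
    apply Measurable.indicator _ measurableSet_Icc
    fun_prop
  calc ∫⁻ v in Set.Ioi (0:ℝ),
          ENNReal.ofReal (Real.exp (-4 * t * v ^ 2) * |v - τ| ^ (-(1:ℝ)/2))
      ≤ ∫⁻ v in Set.Ioi (0:ℝ), (g v + h v) := lintegral_mono hpt
    _ = (∫⁻ v in Set.Ioi (0:ℝ), g v) + ∫⁻ v in Set.Ioi (0:ℝ), h v :=
        lintegral_add_left (by fun_prop) _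
    _ ≤ ENNReal.ofReal (4 * Real.sqrt r) + ENNReal.ofReal (r ^ (-(1:ℝ)/2) * (Real.sqrt (Real.pi / (4 * t)) / 2)) := by
        gcongr
        · calc ∫⁻ v in Set.Ioi (0:ℝ), g v
              ≤ ∫⁻ v, g v := setLIntegral_le_lintegral _ _
            _ = ∫⁻ v in Set.Icc (τ - r) (τ + r),
                  ENNReal.ofReal (|v - τ| ^ (-(1:ℝ)/2)) := lintegral_indicator measurableSet_Icc _
            _ ≤ _ := near_total τ r hr
        · have hint : IntegrableOn (fun v : ℝ => Real.exp (-(4 * t) * v ^ 2)) (Set.Ioi 0) := by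
            rw [integrableOn_Ioi_exp_neg_mul_sq_iff]
            linarith
          have : ∫⁻ v in Set.Ioi (0:ℝ), h v
              = ENNReal.ofReal (∫ v in Set.Ioi (0:ℝ),
                  r ^ (-(1:ℝ)/2) * Real.exp (-4 * t * v ^ 2)) := by
            rw [ofReal_integral_eq_lintegral_ofReal]
            · have : (fun v : ℝ => r ^ (-(1:ℝ)/2) * Real.exp (-4 * t * v ^ 2))
                  = fun v : ℝ => r ^ (-(1:ℝ)/2) * Real.exp (-(4 * t) * v ^ 2) := by
                funext v; ring_nf
              rw [this]
              exact hint.const_mul _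
            · filter_upwards with v
              positivity
          rw [this, integral_const_mul]
          apply ENNReal.ofReal_le_ofReal
          have heq : (fun v : ℝ => Real.exp (-4 * t * v ^ 2))
              = fun v : ℝ => Real.exp (-(4 * t) * v ^ 2) := by funext v; ring_nf
          rw [heq, integral_gaussian_Ioi]
    _ ≤ ENNReal.ofReal (5 * t ^ (-(1:ℝ)/4)) := by
        rw [← ENNReal.ofReal_add (by positivity) (by positivity)]
        apply ENNReal.ofReal_le_ofReal
        have hsr : Real.sqrt r = t ^ (-(1:ℝ)/4) := by
          rw [Real.sqrt_eq_rpow, hrdef, ← Real.rpow_mul ht.le]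
          norm_num
        have hrr : r ^ (-(1:ℝ)/2) = t ^ ((1:ℝ)/4) := by
          rw [hrdef, ← Real.rpow_mul ht.le]
          norm_num
        have hgauss : Real.sqrt (Real.pi / (4 * t)) ≤ t ^ (-(1:ℝ)/2) := by
          have h1 : Real.pi / (4 * t) ≤ 1 / t := by
            rw [div_le_div_iff₀ (by positivity) ht]
            nlinarith [Real.pi_le_four]
          calc Real.sqrt (Real.pi / (4 * t)) ≤ Real.sqrt (1 / t) := Real.sqrt_le_sqrt h1
            _ = t ^ (-(1:ℝ)/2) := by
                rw [Real.sqrt_eq_rpow, one_div, Real.inv_rpow ht.le, ← Real.rpow_neg ht.le]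
                norm_num
        have hmul : t ^ ((1:ℝ)/4) * t ^ (-(1:ℝ)/2) = t ^ (-(1:ℝ)/4) := by
          rw [← Real.rpow_add ht]; norm_num
        have hpos : 0 < t ^ (-(1:ℝ)/4) := Real.rpow_pos_of_pos ht _
        have hpos2 : (0:ℝ) ≤ t ^ ((1:ℝ)/4) := (Real.rpow_pos_of_pos ht _).le
        rw [hsr, hrr]
        nlinarith [Real.sqrt_nonneg (Real.pi / (4 * t))]
end

section
/- For every real p with 2 < p < 4, setting q = p/(p − 1), there exists a constant C > 0 such that for every t > 0 and every τ ∈ ℝ, ∫_{0}^{∞} e^{−4 t v²} v^{(1/p) − (1/2)} |v − τ|^{(1/q) − 1} dv ≤ C t^{−1/4}. -/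
open MeasureTheory Set
open scoped ENNReal

/-- Reflection invariance of the Lebesgue lintegral on `ℝ`. -/
lemma my_lintegral_comp_neg (f : ℝ → ℝ≥0∞) :
    ∫⁻ x : ℝ, f (-x) = ∫⁻ x : ℝ, f x := by
  conv_rhs => rw [← Measure.map_neg_eq_self (volume : Measure ℝ)]
  exact (lintegral_map_equiv f (MeasurableEquiv.neg ℝ)).symm

/-- Exact value of `∫₀^∞ v^s e^{-c v²} dv` as a lintegral. -/
lemma my_factor1 {s c : ℝ} (hs : -1 < s) (hc : 0 < c) :
    ∫⁻ v in Ioi (0:ℝ), ENNReal.ofReal (v ^ s * Real.exp (-c * v ^ 2))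
      = ENNReal.ofReal (c ^ (-(s + 1) / 2) * (1 / 2) * Real.Gamma ((s + 1) / 2)) := by
  rw [← ofReal_integral_eq_lintegral_ofReal (integrableOn_rpow_mul_exp_neg_mul_sq hc hs)
      ((ae_restrict_mem measurableSet_Ioi).mono fun x hx =>
        mul_nonneg (Real.rpow_nonneg (le_of_lt hx) _) (Real.exp_pos _).le)]
  congr 1
  rw [← integral_rpow_mul_exp_neg_mul_rpow two_pos hs hc]
  refine setIntegral_congr_fun measurableSet_Ioi fun x _ => ?_
  rw [show (2:ℝ) = ((2:ℕ):ℝ) by norm_num, Real.rpow_natCast]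

/-- Uniform-in-`τ` bound for `∫₀^∞ e^{-c v²} |v-τ|^s dv`, splitting at `|v-τ| ≤ δ`. -/
lemma my_factor2 {s c δ : ℝ} (hs : -1 < s) (hs0 : s < 0) (hc : 0 < c) (hδ : 0 < δ) (τ : ℝ) :
    ∫⁻ v in Ioi (0:ℝ), ENNReal.ofReal (Real.exp (-c * v ^ 2) * |v - τ| ^ s)
      ≤ ENNReal.ofReal (2 * (δ ^ (s + 1) / (s + 1)) + δ ^ s * Real.sqrt (Real.pi / c)) := by
  have hs1 : 0 < s + 1 := by linarith
  set Φ : ℝ → ℝ≥0∞ := fun u => ENNReal.ofReal (u ^ s) with hΦ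
  have hΦm : Measurable Φ := by rw [hΦ]; fun_prop
  set Ψ : ℝ → ℝ≥0∞ := (Set.Ioc (0:ℝ) δ).indicator Φ with hΨ
  have hΨm : Measurable Ψ := hΦm.indicator measurableSet_Ioc
  have hEm : Measurable fun v : ℝ => ENNReal.ofReal (δ ^ s * Real.exp (-c * v ^ 2)) := by
    fun_prop
  have key : ∀ v : ℝ, ENNReal.ofReal (Real.exp (-c * v ^ 2) * |v - τ| ^ s)
      ≤ (fun v => Ψ (v - τ) + Ψ (τ - v)
          + ENNReal.ofReal (δ ^ s * Real.exp (-c * v ^ 2))) v := by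
    intro v
    simp only
    have hexp1 : Real.exp (-c * v ^ 2) ≤ 1 := by
      rw [show (1:ℝ) = Real.exp 0 by simp]
      exact Real.exp_le_exp.mpr (by nlinarith [sq_nonneg v])
    rcases eq_or_ne v τ with h | h
    · subst h
      simp [Real.zero_rpow (ne_of_lt hs0)]
    · rcases le_or_gt |v - τ| δ with hle | hgt
      · have habs : (0:ℝ) < |v - τ| := abs_pos.mpr (sub_ne_zero.mpr h)
        have h1 : Real.exp (-c * v ^ 2) * |v - τ| ^ s ≤ |v - τ| ^ s :=
          mul_le_of_le_one_left (Real.rpow_nonneg (abs_nonneg _) s) hexp1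
        rcases lt_or_gt_of_ne (sub_ne_zero.mpr h) with hneg | hpos
        · have habs' : |v - τ| = τ - v := by rw [abs_of_neg hneg]; ring
          have hm : τ - v ∈ Set.Ioc (0:ℝ) δ := by
            constructor
            · linarith
            · rw [← habs']; exact hle
          calc ENNReal.ofReal (Real.exp (-c * v ^ 2) * |v - τ| ^ s)
              ≤ ENNReal.ofReal (|v - τ| ^ s) := ENNReal.ofReal_le_ofReal h1
            _ = Ψ (τ - v) := by rw [hΨ, Set.indicator_of_mem hm, hΦ, habs']
            _ ≤ _ := le_add_right (self_le_add_left _ _)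
        · have habs' : |v - τ| = v - τ := abs_of_pos hpos
          have hm : v - τ ∈ Set.Ioc (0:ℝ) δ := by
            constructor
            · linarith
            · rw [← habs']; exact hle
          calc ENNReal.ofReal (Real.exp (-c * v ^ 2) * |v - τ| ^ s)
              ≤ ENNReal.ofReal (|v - τ| ^ s) := ENNReal.ofReal_le_ofReal h1
            _ = Ψ (v - τ) := by rw [hΨ, Set.indicator_of_mem hm, hΦ, habs']
            _ ≤ _ := le_add_right (self_le_add_right _ _)
      · have h2 : |v - τ| ^ s ≤ δ ^ s :=
          Real.rpow_le_rpow_of_nonpos hδ hgt.le hs0.le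
        refine le_trans (ENNReal.ofReal_le_ofReal ?_) (self_le_add_left _ _)
        rw [mul_comm (δ ^ s)]
        exact mul_le_mul_of_nonneg_left h2 (Real.exp_pos _).le
  have hI1 : ∫⁻ v : ℝ, Ψ (v - τ) = ENNReal.ofReal (δ ^ (s + 1) / (s + 1)) := by
    rw [lintegral_sub_right_eq_self Ψ τ, hΨ, lintegral_indicator measurableSet_Ioc]
    have hint : IntegrableOn (fun u : ℝ => u ^ s) (Set.Ioc 0 δ) :=
      (intervalIntegral.intervalIntegrable_rpow' hs).1
    rw [← ofReal_integral_eq_lintegral_ofReal hint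
        ((ae_restrict_mem measurableSet_Ioc).mono fun x hx =>
          Real.rpow_nonneg hx.1.le s)]
    congr 1
    rw [← intervalIntegral.integral_of_le hδ.le, integral_rpow (Or.inl hs),
      Real.zero_rpow (ne_of_gt hs1)]
    ring
  have hI2 : ∫⁻ v : ℝ, Ψ (τ - v) = ENNReal.ofReal (δ ^ (s + 1) / (s + 1)) := by
    rw [← hI1]
    have : ∀ v : ℝ, Ψ (τ - v) = (fun x => Ψ (τ + x)) (-v) := fun v => by
      simp [sub_eq_add_neg]
    simp_rw [this]
    rw [my_lintegral_comp_neg (fun x => Ψ (τ + x))]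
    simp_rw [show ∀ x : ℝ, τ + x = x + τ from fun x => add_comm τ x]
    rw [lintegral_add_right_eq_self Ψ τ, lintegral_sub_right_eq_self Ψ τ]
  have hI3 : ∫⁻ v : ℝ, ENNReal.ofReal (δ ^ s * Real.exp (-c * v ^ 2))
      = ENNReal.ofReal (δ ^ s * Real.sqrt (Real.pi / c)) := by
    simp_rw [ENNReal.ofReal_mul (Real.rpow_nonneg hδ.le s)]
    rw [lintegral_const_mul _ (by fun_prop)]
    rw [← ofReal_integral_eq_lintegral_ofReal (integrable_exp_neg_mul_sq hc)
        (ae_of_all _ fun x => (Real.exp_pos _).le)]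
    rw [integral_gaussian]
  calc ∫⁻ v in Ioi (0:ℝ), ENNReal.ofReal (Real.exp (-c * v ^ 2) * |v - τ| ^ s)
      ≤ ∫⁻ v : ℝ, ENNReal.ofReal (Real.exp (-c * v ^ 2) * |v - τ| ^ s) :=
        setLIntegral_le_lintegral _ _
    _ ≤ ∫⁻ v : ℝ, (Ψ (v - τ) + Ψ (τ - v)
          + ENNReal.ofReal (δ ^ s * Real.exp (-c * v ^ 2))) := lintegral_mono key
    _ = (∫⁻ v : ℝ, Ψ (v - τ)) + (∫⁻ v : ℝ, Ψ (τ - v))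
          + ∫⁻ v : ℝ, ENNReal.ofReal (δ ^ s * Real.exp (-c * v ^ 2)) := by
        have hm1 : Measurable fun v : ℝ => Ψ (v - τ) :=
          hΨm.comp (measurable_id.sub_const τ)
        have hm2 : Measurable fun v : ℝ => Ψ (τ - v) :=
          hΨm.comp (measurable_const.sub measurable_id)
        rw [lintegral_add_left (f := fun v => Ψ (v - τ) + Ψ (τ - v)) (hm1.add hm2), lintegral_add_left hm1]
    _ ≤ ENNReal.ofReal (2 * (δ ^ (s + 1) / (s + 1)) + δ ^ s * Real.sqrt (Real.pi / c)) := by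
        rw [hI1, hI2, hI3, ← ENNReal.ofReal_add (by positivity) (by positivity),
          ← ENNReal.ofReal_add (by positivity) (by positivity)]
        exact ENNReal.ofReal_le_ofReal (by ring_nf; exact le_refl _)

/-- Scalar inequality concluding the estimate of I₂ in Proposition 7.1:
for 2 < p < 4 and q = p/(p−1),
∫₀^∞ e^{−4tv²} v^{1/p−1/2} |v−τ|^{1/q−1} dv ≤ C t^{−1/4}, uniformly in τ ∈ ℝ. -/
theorem scalar_estimate_I2 :
    ∀ p : ℝ, 2 < p → p < 4 → ∀ q : ℝ, q = p / (p - 1) →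
      ∃ C > (0:ℝ), ∀ t : ℝ, 0 < t → ∀ τ : ℝ,
        ∫⁻ v in Set.Ioi (0:ℝ),
            ENNReal.ofReal (Real.exp (-4 * t * v ^ 2) * v ^ ((1:ℝ) / p - 1 / 2) *
              |v - τ| ^ ((1:ℝ) / q - 1))
          ≤ ENNReal.ofReal (C * t ^ (-(1:ℝ) / 4)) := by
  intro p hp2 hp4 q hq
  have hp0 : (0:ℝ) < p := by linarith
  have hp1 : (0:ℝ) < p - 1 := by linarith
  have hq1 : 1 / q = 1 - 1 / p := by
    rw [hq]; field_simp
  set a : ℝ := 1 / p - 1 / 2 with ha_def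
  set b : ℝ := -(1 / p) with hb_def
  have hbq : (1:ℝ) / q - 1 = b := by rw [hq1, hb_def]; ring
  have h14 : (1:ℝ) / 4 < 1 / p := by
    rw [div_lt_div_iff₀ (by norm_num) hp0]; linarith
  have h12 : (1:ℝ) / p < 1 / 2 := by
    rw [div_lt_div_iff₀ hp0 (by norm_num)]; linarith
  have ha1 : -1 < 2 * a := by rw [ha_def]; linarith
  have ha2 : (0:ℝ) < (2 * a + 1) / 2 := by linarith
  have hb1 : -1 < 2 * b := by rw [hb_def]; linarith
  have hb0 : 2 * b < 0 := by rw [hb_def]; linarith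
  have hb2 : (0:ℝ) < 2 * b + 1 := by linarith
  have hab : a + b = -(1 / 2) := by rw [ha_def, hb_def]; ring
  set K₁ : ℝ := 4 ^ (-(2 * a + 1) / 2) * (1 / 2) * Real.Gamma ((2 * a + 1) / 2) with hK₁_def
  have hK₁pos : 0 < K₁ := by
    have hg := Real.Gamma_pos_of_pos ha2
    have h4 : (0:ℝ) < 4 ^ (-(2 * a + 1) / 2) := Real.rpow_pos_of_pos (by norm_num) _
    positivity
  set K₂ : ℝ := 2 * (1 / (2 * b + 1)) + Real.sqrt (Real.pi / 4) with hK₂_def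
  have hK₂pos : 0 < K₂ := by
    have h1 : (0:ℝ) < 2 * (1 / (2 * b + 1)) := by positivity
    have h2 : (0:ℝ) ≤ Real.sqrt (Real.pi / 4) := Real.sqrt_nonneg _
    rw [hK₂_def]; linarith
  refine ⟨K₁ ^ ((1:ℝ) / 2) * K₂ ^ ((1:ℝ) / 2), by positivity, ?_⟩
  intro t ht τ
  have h4t : (0:ℝ) < 4 * t := by linarith
  set δ : ℝ := t ^ (-(1 / 2) : ℝ) with hδ_def
  have hδpos : 0 < δ := Real.rpow_pos_of_pos ht _
  set f : ℝ → ℝ≥0∞ := fun v => ENNReal.ofReal (Real.exp (-(2 * t) * v ^ 2) * v ^ a) with hf_def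
  set g : ℝ → ℝ≥0∞ :=
    fun v => ENNReal.ofReal (Real.exp (-(2 * t) * v ^ 2) * |v - τ| ^ b) with hg_def
  have hfm : Measurable f := by rw [hf_def]; fun_prop
  have hgm : Measurable g := by rw [hg_def]; fun_prop
  -- pointwise squares
  have hsq : ∀ x : ℝ≥0∞, x ^ (2:ℝ) = x * x := fun x => by
    rw [show (2:ℝ) = ((2:ℕ):ℝ) by norm_num, ENNReal.rpow_natCast, sq]
  have hf2 : ∀ v ∈ Ioi (0:ℝ),
      f v ^ (2:ℝ) = ENNReal.ofReal (v ^ (2 * a) * Real.exp (-(4 * t) * v ^ 2)) := by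
    intro v hv
    have hv0 : (0:ℝ) < v := hv
    rw [hsq, hf_def, ← ENNReal.ofReal_mul (by positivity)]
    congr 1
    have h1 : Real.exp (-(2 * t) * v ^ 2) * Real.exp (-(2 * t) * v ^ 2)
        = Real.exp (-(4 * t) * v ^ 2) := by rw [← Real.exp_add]; congr 1; ring
    have h2 : v ^ a * v ^ a = v ^ (2 * a) := by
      rw [show 2 * a = a + a by ring, Real.rpow_add hv0]
    rw [← h1, ← h2]; ring
  have hg2 : ∀ v : ℝ,
      g v ^ (2:ℝ) = ENNReal.ofReal (Real.exp (-(4 * t) * v ^ 2) * |v - τ| ^ (2 * b)) := by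
    intro v
    rw [hsq, hg_def, ← ENNReal.ofReal_mul (by positivity)]
    congr 1
    have h1 : Real.exp (-(2 * t) * v ^ 2) * Real.exp (-(2 * t) * v ^ 2)
        = Real.exp (-(4 * t) * v ^ 2) := by rw [← Real.exp_add]; congr 1; ring
    have h2 : |v - τ| ^ b * |v - τ| ^ b = |v - τ| ^ (2 * b) := by
      rw [show 2 * b = b + b by ring, Real.rpow_add' (abs_nonneg _) (by linarith)]
    rw [← h1, ← h2]; ring
  -- the two factors
  have hF1 : ∫⁻ v in Ioi (0:ℝ), f v ^ (2:ℝ)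
      = ENNReal.ofReal (K₁ * t ^ (-(2 * a + 1) / 2)) := by
    rw [setLIntegral_congr_fun measurableSet_Ioi hf2]
    rw [my_factor1 ha1 h4t]
    congr 1
    rw [Real.mul_rpow (by norm_num) ht.le, hK₁_def]
    ring
  have hF2 : ∫⁻ v in Ioi (0:ℝ), g v ^ (2:ℝ)
      ≤ ENNReal.ofReal (K₂ * t ^ (-(2 * b + 1) / 2)) := by
    have := my_factor2 hb1 hb0 h4t hδpos τ
    rw [show ∫⁻ v in Ioi (0:ℝ), g v ^ (2:ℝ) = ∫⁻ v in Ioi (0:ℝ),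
        ENNReal.ofReal (Real.exp (-(4 * t) * v ^ 2) * |v - τ| ^ (2 * b)) from
      lintegral_congr fun v => hg2 v]
    have e1 : δ ^ (2 * b + 1) = t ^ (-(2 * b + 1) / 2) := by
      rw [hδ_def, ← Real.rpow_mul ht.le]
      congr 1; ring
    have e2 : δ ^ (2 * b) * Real.sqrt (Real.pi / (4 * t))
        = Real.sqrt (Real.pi / 4) * t ^ (-(2 * b + 1) / 2) := by
      have h1 : Real.pi / (4 * t) = Real.pi / 4 * t⁻¹ := by field_simp
      rw [h1, Real.sqrt_mul (by positivity), Real.sqrt_inv,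
        Real.sqrt_eq_rpow t, ← Real.rpow_neg ht.le,
        hδ_def, ← Real.rpow_mul ht.le]
      have e3 : t ^ ((-(1 / 2) : ℝ) * (2 * b)) * t ^ ((-(1 / 2)) : ℝ)
          = t ^ (-(2 * b + 1) / 2) := by
        rw [← Real.rpow_add ht]; congr 1; ring
      rw [← e3]; ring
    have heq : 2 * (δ ^ (2 * b + 1) / (2 * b + 1)) + δ ^ (2 * b) * Real.sqrt (Real.pi / (4 * t))
        = K₂ * t ^ (-(2 * b + 1) / 2) := by
      rw [e1, e2, hK₂_def]; ring
    exact this.trans (le_of_eq (by rw [heq]))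
  -- put it together
  have hconj : Real.HolderConjugate 2 2 := Real.HolderConjugate.two_two
  have hmain : ∫⁻ v in Ioi (0:ℝ),
      ENNReal.ofReal (Real.exp (-4 * t * v ^ 2) * v ^ ((1:ℝ) / p - 1 / 2) *
        |v - τ| ^ ((1:ℝ) / q - 1))
      = ∫⁻ v in Ioi (0:ℝ), (f * g) v := by
    refine setLIntegral_congr_fun measurableSet_Ioi (fun v hv => ?_)
    have hv0 : (0:ℝ) < v := hv
    rw [Pi.mul_apply, hf_def, hg_def, ← ENNReal.ofReal_mul (by positivity)]
    congr 1
    have h1 : Real.exp (-4 * t * v ^ 2)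
        = Real.exp (-(2 * t) * v ^ 2) * Real.exp (-(2 * t) * v ^ 2) := by
      rw [← Real.exp_add]; congr 1; ring
    rw [hbq, show (1:ℝ) / p - 1 / 2 = a from rfl, h1]
    ring
  rw [hmain]
  calc ∫⁻ v in Ioi (0:ℝ), (f * g) v
      ≤ (∫⁻ v in Ioi (0:ℝ), f v ^ (2:ℝ)) ^ ((1:ℝ) / 2)
        * (∫⁻ v in Ioi (0:ℝ), g v ^ (2:ℝ)) ^ ((1:ℝ) / 2) :=
        ENNReal.lintegral_mul_le_Lp_mul_Lq _ hconj hfm.aemeasurable hgm.aemeasurable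
    _ ≤ (ENNReal.ofReal (K₁ * t ^ (-(2 * a + 1) / 2))) ^ ((1:ℝ) / 2)
        * (ENNReal.ofReal (K₂ * t ^ (-(2 * b + 1) / 2))) ^ ((1:ℝ) / 2) := by
        rw [hF1]
        exact mul_le_mul' le_rfl (ENNReal.rpow_le_rpow hF2 (by norm_num))
    _ = ENNReal.ofReal (K₁ ^ ((1:ℝ) / 2) * K₂ ^ ((1:ℝ) / 2) * t ^ (-(1:ℝ) / 4)) := by
        rw [ENNReal.ofReal_rpow_of_nonneg (by positivity) (by norm_num),
          ENNReal.ofReal_rpow_of_nonneg (by positivity) (by norm_num),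
          ← ENNReal.ofReal_mul (by positivity)]
        congr 1
        rw [Real.mul_rpow hK₁pos.le (Real.rpow_nonneg ht.le _),
          Real.mul_rpow hK₂pos.le (Real.rpow_nonneg ht.le _),
          ← Real.rpow_mul ht.le, ← Real.rpow_mul ht.le]
        have hexp : -(2 * a + 1) / 2 * (1 / 2) + -(2 * b + 1) / 2 * (1 / 2) = -(1:ℝ) / 4 := by
          have : a + b = -(1 / 2) := hab
          linarith
        rw [show K₁ ^ ((1:ℝ)/2) * (t ^ (-(2 * a + 1) / 2 * (1/2))) *
            (K₂ ^ ((1:ℝ)/2) * (t ^ (-(2 * b + 1) / 2 * (1/2))))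
          = K₁ ^ ((1:ℝ)/2) * K₂ ^ ((1:ℝ)/2) *
            (t ^ (-(2 * a + 1) / 2 * (1/2)) * t ^ (-(2 * b + 1) / 2 * (1/2))) by ring,
          ← Real.rpow_add ht, hexp]
end

section
/- There exists a constant C > 0 such that for every t > 0 and every g ∈ L²(ℝ, ℂ), ∫_{v=0}^{∞} ∫_{u=v}^{∞} e^{−4 t u v} |g(u)| du dv ≤ C ‖g‖_{L²(ℝ)} t^{−3/4}. -/
open MeasureTheory Set Real Filter
open scoped ENNReal NNReal

lemma exp_integral_Ioi' {c v : ℝ} (hc : 0 < c) :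
    ∫ u in Ioi v, Real.exp (-(c * u)) = Real.exp (-(c * v)) / c := by
  have hderiv : ∀ x ∈ Ici v, HasDerivAt (fun u => -Real.exp (-(c * u)) / c)
      (Real.exp (-(c * x))) x := by
    intro x _
    have h1 : HasDerivAt (fun u : ℝ => -(c * u)) (-c) x := by
      have := ((hasDerivAt_id x).const_mul c).neg
      simp only [mul_one] at this
      exact this
    have h2 := (h1.exp.neg).div_const c
    refine h2.congr_deriv ?_
    rw [div_eq_iff hc.ne']; ring
  have hint : IntegrableOn (fun u => Real.exp (-(c * u))) (Ioi v) := by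
    simpa [neg_mul] using exp_neg_integrableOn_Ioi v hc
  have htop : Tendsto (fun u => -Real.exp (-(c * u)) / c) atTop (nhds 0) := by
    have h3 : Tendsto (fun u : ℝ => -(c * u)) atTop atBot := by
      exact tendsto_neg_atTop_atBot.comp (tendsto_id.const_mul_atTop hc)
    have := (Real.tendsto_exp_atBot.comp h3).neg.div_const c
    simpa using this
  have := integral_Ioi_of_hasDerivAt_of_tendsto' hderiv hint htop
  rw [this]; ring

/-- Estimate of I₃ in Section 7:
∫₀^∞ ∫_v^∞ e^{−4tuv} |g(u)| du dv ≤ C ‖g‖_{L²} t^{−3/4}. -/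
theorem I3_estimate :
    ∃ C > (0:ℝ), ∀ t : ℝ, 0 < t → ∀ g : ℝ → ℂ, MemLp g 2 →
      ∫⁻ v in Set.Ioi (0:ℝ), ∫⁻ u in Set.Ioi v,
          ENNReal.ofReal (Real.exp (-4 * t * u * v) * ‖g u‖)
        ≤ ENNReal.ofReal (C * (eLpNorm g 2 volume).toReal * t ^ (-(3:ℝ) / 4)) := by
  refine ⟨(8:ℝ) ^ (-(1:ℝ)/2) * ((4:ℝ) ^ (-(1:ℝ)/4) * (1/2) * Real.Gamma (1/4)),
    by positivity, ?_⟩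
  intro t ht g hg
  set C : ℝ := (8:ℝ) ^ (-(1:ℝ)/2) * ((4:ℝ) ^ (-(1:ℝ)/4) * (1/2) * Real.Gamma (1/4)) with hC
  set N : ℝ≥0∞ := eLpNorm g 2 volume with hNdef
  have hNtop : N ≠ ⊤ := hg.2.ne
  set F : ℝ → ℝ := fun v => (8*t) ^ (-(1:ℝ)/2) * (v ^ (-(1:ℝ)/2) * Real.exp (-(4*t) * v^2))
    with hF
  -- pointwise (in v) bound on the inner integral, via Cauchy–Schwarz
  have inner_bound : ∀ v ∈ Ioi (0:ℝ),
      (∫⁻ u in Ioi v, ENNReal.ofReal (Real.exp (-4*t*u*v) * ‖g u‖))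
        ≤ ENNReal.ofReal (F v) * N := by
    intro v hv
    rw [mem_Ioi] at hv
    set f : ℝ → ℝ≥0∞ := fun u => ENNReal.ofReal (Real.exp (-4*t*u*v)) with hf
    set h : ℝ → ℝ≥0∞ := fun u => (‖g u‖₊ : ℝ≥0∞) with hh
    have hsplit : ∀ u : ℝ, ENNReal.ofReal (Real.exp (-4*t*u*v) * ‖g u‖)
        = (f * h) u := by
      intro u
      simp only [Pi.mul_apply, hf, hh]
      rw [← enorm_eq_nnnorm, ← ofReal_norm, ← ENNReal.ofReal_mul (Real.exp_nonneg _)]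
    have hconj : Real.HolderConjugate 2 2 := by constructor <;> norm_num
    have hfmeas : AEMeasurable f (volume.restrict (Ioi v)) := by
      apply Measurable.aemeasurable
      exact ENNReal.measurable_ofReal.comp (by fun_prop)
    have hhmeas : AEMeasurable h (volume.restrict (Ioi v)) :=
      hg.1.restrict.enorm
    calc (∫⁻ u in Ioi v, ENNReal.ofReal (Real.exp (-4*t*u*v) * ‖g u‖))
        = ∫⁻ u in Ioi v, (f * h) u := by simp_rw [hsplit]
      _ ≤ (∫⁻ u in Ioi v, f u ^ (2:ℝ)) ^ ((1:ℝ)/2)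
            * (∫⁻ u in Ioi v, h u ^ (2:ℝ)) ^ ((1:ℝ)/2) :=
          ENNReal.lintegral_mul_le_Lp_mul_Lq _ hconj hfmeas hhmeas
      _ ≤ ENNReal.ofReal (F v) * N := by
          gcongr
          · -- first factor: explicit exponential integral
            have hc : (0:ℝ) < 8*t*v := by positivity
            have e1 : (∫⁻ u in Ioi v, f u ^ (2:ℝ))
                = ENNReal.ofReal (Real.exp (-(8*t*v * v)) / (8*t*v)) := by
              have : ∀ u : ℝ, f u ^ (2:ℝ) = ENNReal.ofReal (Real.exp (-(8*t*v * u))) := by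
                intro u
                show ENNReal.ofReal (Real.exp (-4*t*u*v)) ^ (2:ℝ) = _
                rw [ENNReal.ofReal_rpow_of_pos (Real.exp_pos _), ← Real.exp_mul,
                  show (-4*t*u*v) * 2 = -(8*t*v*u) by ring]
              simp_rw [this]
              rw [← ofReal_integral_eq_lintegral_ofReal]
              · rw [show (∫ u in Ioi v, Real.exp (-(8*t*v * u)))
                    = Real.exp (-(8*t*v * v)) / (8*t*v) from by
                  simpa [mul_assoc] using exp_integral_Ioi' (v := v) hc]
              · have := exp_neg_integrableOn_Ioi v hc
                simp only [neg_mul] at this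
                exact this
              · exact ae_of_all _ fun u => (Real.exp_pos _).le
            rw [e1, ENNReal.ofReal_rpow_of_pos (by positivity)]
            apply le_of_eq
            congr 1
            have h8 : (0:ℝ) < (8*t) ^ ((1:ℝ)/2) := by positivity
            have hvp : (0:ℝ) < v ^ ((1:ℝ)/2) := by positivity
            rw [Real.div_rpow (Real.exp_nonneg _) hc.le, ← Real.exp_mul,
              show (8*t*v : ℝ) = (8*t) * v from rfl,
              Real.mul_rpow (by positivity) hv.le, hF,
              show -(8*t*v*v) * (1/2) = -(4*t) * v^2 from by ring]
            beta_reduce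
            rw [show (-1:ℝ)/2 = -(1/2) by norm_num,
              Real.rpow_neg (by positivity : (0:ℝ) ≤ 8*t), Real.rpow_neg hv.le]
            field_simp
          · -- second factor bounded by the L² norm
            rw [hNdef, eLpNorm_eq_lintegral_rpow_enorm_toReal two_ne_zero ENNReal.ofNat_ne_top]
            simp only [ENNReal.toReal_ofNat]
            gcongr
            exact Measure.restrict_le_self
            exact le_rfl
  -- integrate the bound in v
  have hFmeas : Measurable fun v : ℝ =>
      ENNReal.ofReal ((8*t) ^ (-(1:ℝ)/2) * (v ^ (-(1:ℝ)/2) * Real.exp (-(4*t) * v^2))) := by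
    fun_prop
  have hFint : IntegrableOn F (Ioi 0) := by
    apply Integrable.const_mul
    exact integrableOn_rpow_mul_exp_neg_mul_sq (by positivity) (by norm_num)
  have hFval : ∫ v in Ioi 0, F v = C * t ^ (-(3:ℝ)/4) := by
    rw [hF, integral_const_mul]
    have : ∫ v in Ioi (0:ℝ), v ^ (-(1:ℝ)/2) * Real.exp (-(4*t) * v^2)
        = (4*t) ^ (-(-(1:ℝ)/2 + 1) / 2) * (1/2) * Real.Gamma ((-(1:ℝ)/2 + 1) / 2) := by
      rw [← integral_rpow_mul_exp_neg_mul_rpow two_pos (by norm_num) (by positivity)]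
      refine setIntegral_congr_fun measurableSet_Ioi fun x hx => ?_
      rw [Real.rpow_two]
    rw [this]
    have h1 : (8*t : ℝ) ^ (-(1:ℝ)/2) = (8:ℝ) ^ (-(1:ℝ)/2) * t ^ (-(1:ℝ)/2) :=
      Real.mul_rpow (by norm_num) ht.le
    have h2 : (4*t : ℝ) ^ (-(-(1:ℝ)/2 + 1) / 2) = (4:ℝ) ^ (-(1:ℝ)/4) * t ^ (-(1:ℝ)/4) := by
      rw [show (-(-(1:ℝ)/2 + 1) / 2) = -(1:ℝ)/4 by norm_num]
      exact Real.mul_rpow (by norm_num) ht.le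
    have h3 : t ^ (-(1:ℝ)/2) * t ^ (-(1:ℝ)/4) = t ^ (-(3:ℝ)/4) := by
      rw [← Real.rpow_add ht]; norm_num
    rw [h1, h2, show (-(1:ℝ)/2 + 1) / 2 = (1:ℝ)/4 by norm_num, hC, ← h3]
    ring
  calc ∫⁻ v in Ioi (0:ℝ), ∫⁻ u in Ioi v,
          ENNReal.ofReal (Real.exp (-4*t*u*v) * ‖g u‖)
      ≤ ∫⁻ v in Ioi (0:ℝ), ENNReal.ofReal (F v) * N :=
        setLIntegral_mono' measurableSet_Ioi inner_bound
    _ = (∫⁻ v in Ioi (0:ℝ), ENNReal.ofReal (F v)) * N :=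
        lintegral_mul_const _ hFmeas
    _ = ENNReal.ofReal (C * t ^ (-(3:ℝ)/4)) * N := by
        rw [← ofReal_integral_eq_lintegral_ofReal hFint
          ((ae_restrict_iff' measurableSet_Ioi).2 (ae_of_all _ fun v hv => by
            have hv' : (0:ℝ) < v := hv
            positivity)), hFval]
    _ = ENNReal.ofReal (C * N.toReal * t ^ (-(3:ℝ)/4)) := by
        have hC0 : 0 ≤ C := by rw [hC]; positivity
        conv_lhs => rw [← ENNReal.ofReal_toReal hNtop]
        rw [← ENNReal.ofReal_mul (by positivity)]
        congr 1
        ring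
end

section
/- There exists a constant C > 0 such that for every t > 0, ∫_{v=0}^{∞} ∫_{u=v}^{∞} e^{−4 t u v} (u² + v²)^{−1/4} du dv ≤ C t^{−3/4}. -/
open MeasureTheory

lemma aux_gamma_one (b : ℝ) (hb : 0 < b) :
    ∫⁻ x in Set.Ioi (0:ℝ), ENNReal.ofReal (x ^ (-(1:ℝ)/2) * Real.exp (-b * x))
      = ENNReal.ofReal (b ^ (-(1:ℝ)/2) * Real.sqrt Real.pi) := by
  have hint : IntegrableOn (fun x : ℝ => x ^ (-(1:ℝ)/2) * Real.exp (-b * x)) (Set.Ioi 0) := by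
    have := integrableOn_rpow_mul_exp_neg_mul_rpow (p := 1) (s := -(1:ℝ)/2) (b := b)
      (by norm_num) one_pos hb
    simpa [Real.rpow_one] using this
  rw [← MeasureTheory.ofReal_integral_eq_lintegral_ofReal hint]
  · congr 1
    have := integral_rpow_mul_exp_neg_mul_rpow (p := 1) (q := -(1:ℝ)/2) (b := b)
      one_pos (by norm_num) hb
    simp only [Real.rpow_one] at this
    rw [this]
    norm_num [Real.Gamma_one_half_eq]
  · refine (ae_restrict_iff' measurableSet_Ioi).2 (Filter.Eventually.of_forall fun x hx => ?_)
    have hx' : 0 < x := hx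
    positivity

lemma aux_gamma_two (b : ℝ) (hb : 0 < b) :
    ∫⁻ x in Set.Ioi (0:ℝ), ENNReal.ofReal (x ^ (-(1:ℝ)/2) * Real.exp (-b * x ^ 2))
      = ENNReal.ofReal (b ^ (-(1:ℝ)/4) * ((1/2) * Real.Gamma (1/4))) := by
  have hpow : ∀ x : ℝ, 0 < x → x ^ ((2:ℕ):ℝ) = x ^ (2:ℕ) := fun x hx => Real.rpow_natCast x 2
  have hint : IntegrableOn (fun x : ℝ => x ^ (-(1:ℝ)/2) * Real.exp (-b * x ^ 2)) (Set.Ioi 0) := by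
    have := integrableOn_rpow_mul_exp_neg_mul_rpow (p := 2) (s := -(1:ℝ)/2) (b := b)
      (by norm_num) two_pos hb
    refine this.congr_fun (fun x hx => ?_) measurableSet_Ioi
    beta_reduce
    rw [show ((2:ℝ)) = ((2:ℕ):ℝ) by norm_num, hpow x hx]
  rw [← MeasureTheory.ofReal_integral_eq_lintegral_ofReal hint]
  · congr 1
    have h2 := integral_rpow_mul_exp_neg_mul_rpow (p := 2) (q := -(1:ℝ)/2) (b := b)
      two_pos (by norm_num) hb
    have heq : ∫ x in Set.Ioi (0:ℝ), x ^ (-(1:ℝ)/2) * Real.exp (-b * x ^ 2)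
        = ∫ x in Set.Ioi (0:ℝ), x ^ (-(1:ℝ)/2) * Real.exp (-b * x ^ (2:ℝ)) := by
      refine setIntegral_congr_fun measurableSet_Ioi (fun x hx => ?_)
      rw [show ((2:ℝ)) = ((2:ℕ):ℝ) by norm_num, hpow x hx]
    rw [heq, h2]
    norm_num [mul_assoc]
  · refine (ae_restrict_iff' measurableSet_Ioi).2 (Filter.Eventually.of_forall fun x hx => ?_)
    have hx' : 0 < x := hx
    positivity

/-- Estimate of I₄ in Section 7:
∫₀^∞ ∫_v^∞ e^{−4tuv} (u²+v²)^{−1/4} du dv ≤ C t^{−3/4}. -/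
theorem I4_estimate :
    ∃ C > (0:ℝ), ∀ t : ℝ, 0 < t →
      ∫⁻ v in Set.Ioi (0:ℝ), ∫⁻ u in Set.Ioi v,
          ENNReal.ofReal (Real.exp (-4 * t * u * v) * (u ^ 2 + v ^ 2) ^ (-(1:ℝ) / 4))
        ≤ ENNReal.ofReal (C * t ^ (-(3:ℝ) / 4)) := by
  have hπ : (0:ℝ) < Real.pi := Real.pi_pos
  refine ⟨Real.sqrt Real.pi * (2:ℝ) ^ (-(3:ℝ)/4) * ((1/2) * Real.Gamma (1/4)),
    by positivity, fun t ht => ?_⟩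
  set K : ℝ := Real.sqrt Real.pi * (2*t) ^ (-(1:ℝ)/2) with hK
  have hKpos : 0 < K := by positivity
  have step1 : ∫⁻ v in Set.Ioi (0:ℝ), ∫⁻ u in Set.Ioi v,
        ENNReal.ofReal (Real.exp (-4 * t * u * v) * (u ^ 2 + v ^ 2) ^ (-(1:ℝ) / 4))
      ≤ ∫⁻ v in Set.Ioi (0:ℝ),
        ENNReal.ofReal (K * (v ^ (-(1:ℝ)/2) * Real.exp (-(2*t) * v ^ 2))) := by
    refine setLIntegral_mono' measurableSet_Ioi (fun v hv => ?_)
    have hv' : 0 < v := hv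
    have hbv : 0 < 2 * t * v := by positivity
    calc ∫⁻ u in Set.Ioi v,
          ENNReal.ofReal (Real.exp (-4 * t * u * v) * (u ^ 2 + v ^ 2) ^ (-(1:ℝ) / 4))
        ≤ ∫⁻ u in Set.Ioi v,
          ENNReal.ofReal (Real.exp (-(2*t) * v ^ 2) *
            (u ^ (-(1:ℝ)/2) * Real.exp (-(2*t*v) * u))) := by
          refine setLIntegral_mono' measurableSet_Ioi (fun u hu => ?_)
          have hu' : v < u := hu
          have hu0 : 0 < u := hv'.trans hu'
          refine ENNReal.ofReal_le_ofReal ?_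
          have h1 : (u ^ 2 + v ^ 2) ^ (-(1:ℝ)/4) ≤ u ^ (-(1:ℝ)/2) := by
            have : (u ^ 2 + v ^ 2) ^ (-(1:ℝ)/4) ≤ (u ^ 2) ^ (-(1:ℝ)/4) :=
              Real.rpow_le_rpow_of_nonpos (by positivity) (by nlinarith) (by norm_num)
            refine this.trans (le_of_eq ?_)
            rw [show (u:ℝ) ^ 2 = u ^ ((2:ℕ):ℝ) from (Real.rpow_natCast u 2).symm,
              ← Real.rpow_mul hu0.le]
            norm_num
          have h2 : Real.exp (-4 * t * u * v) ≤
              Real.exp (-(2*t) * v ^ 2) * Real.exp (-(2*t*v) * u) := by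
            rw [← Real.exp_add]
            refine Real.exp_le_exp.2 ?_
            nlinarith [mul_pos ht (mul_pos hv' (sub_pos.2 hu'))]
          calc Real.exp (-4 * t * u * v) * (u ^ 2 + v ^ 2) ^ (-(1:ℝ) / 4)
              ≤ (Real.exp (-(2*t) * v ^ 2) * Real.exp (-(2*t*v) * u)) * u ^ (-(1:ℝ)/2) := by
                refine mul_le_mul h2 ?_ (by positivity) (by positivity)
                have := h1; linarith [h1]
            _ = Real.exp (-(2*t) * v ^ 2) * (u ^ (-(1:ℝ)/2) * Real.exp (-(2*t*v) * u)) := by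
                ring
      _ ≤ ∫⁻ u in Set.Ioi (0:ℝ),
          ENNReal.ofReal (Real.exp (-(2*t) * v ^ 2) *
            (u ^ (-(1:ℝ)/2) * Real.exp (-(2*t*v) * u))) :=
          lintegral_mono_set (Set.Ioi_subset_Ioi hv'.le)
      _ = ENNReal.ofReal (Real.exp (-(2*t) * v ^ 2)) *
          ∫⁻ u in Set.Ioi (0:ℝ),
            ENNReal.ofReal (u ^ (-(1:ℝ)/2) * Real.exp (-(2*t*v) * u)) := by
          simp_rw [ENNReal.ofReal_mul (Real.exp_nonneg _)]
          rw [lintegral_const_mul]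
          exact (Measurable.ennreal_ofReal (by fun_prop))
      _ = ENNReal.ofReal (Real.exp (-(2*t) * v ^ 2)) *
          ENNReal.ofReal ((2*t*v) ^ (-(1:ℝ)/2) * Real.sqrt Real.pi) := by
          rw [aux_gamma_one _ hbv]
      _ ≤ ENNReal.ofReal (K * (v ^ (-(1:ℝ)/2) * Real.exp (-(2*t) * v ^ 2))) := by
          rw [← ENNReal.ofReal_mul (Real.exp_nonneg _)]
          refine ENNReal.ofReal_le_ofReal (le_of_eq ?_)
          rw [hK, Real.mul_rpow (by positivity) hv'.le]
          ring
  refine step1.trans ?_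
  have key : ∫⁻ v in Set.Ioi (0:ℝ),
      ENNReal.ofReal (K * (v ^ (-(1:ℝ)/2) * Real.exp (-(2*t) * v ^ 2)))
      = ENNReal.ofReal K *
        ENNReal.ofReal ((2*t) ^ (-(1:ℝ)/4) * ((1/2) * Real.Gamma (1/4))) := by
    simp_rw [ENNReal.ofReal_mul hKpos.le]
    rw [lintegral_const_mul]
    · rw [aux_gamma_two _ (by positivity)]
    · exact (Measurable.ennreal_ofReal (by fun_prop))
  rw [key, ← ENNReal.ofReal_mul hKpos.le]
  refine ENNReal.ofReal_le_ofReal (le_of_eq ?_)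
  rw [hK]
  have h2t : (2*t) ^ (-(1:ℝ)/2) * (2*t) ^ (-(1:ℝ)/4) = (2*t) ^ (-(3:ℝ)/4) := by
    rw [← Real.rpow_add (by positivity)]
    norm_num
  have h3 : (2*t) ^ (-(3:ℝ)/4) = (2:ℝ) ^ (-(3:ℝ)/4) * t ^ (-(3:ℝ)/4) :=
    Real.mul_rpow (by norm_num) ht.le
  calc Real.sqrt Real.pi * (2*t) ^ (-(1:ℝ)/2) *
        ((2*t) ^ (-(1:ℝ)/4) * ((1/2) * Real.Gamma (1/4)))
      = Real.sqrt Real.pi * ((2*t) ^ (-(1:ℝ)/2) * (2*t) ^ (-(1:ℝ)/4)) *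
        ((1/2) * Real.Gamma (1/4)) := by ring
    _ = Real.sqrt Real.pi * (2:ℝ) ^ (-(3:ℝ)/4) * ((1/2) * Real.Gamma (1/4)) *
        t ^ (-(3:ℝ)/4) := by rw [h2t, h3]; ring
end

section
/- Let a, b ∈ ℝ, let q : ℝ → ℂ be measurable with q ∈ L¹(ℝ) and q ∈ L²(ℝ), and fix λ ∈ ℝ; set z = λ(aλ − 2b) ∈ ℝ and G(y) = ∫_{−∞}^{y} |q(s)|² ds. For a scalar c ∈ ℂ and a 2×2 complex matrix M, let e^{c σ̂₃} M denote the matrix obtained from M by multiplying its (1,2) entry by e^{2c} and its (2,1) entry by e^{−2c} (i.e. e^{cσ₃} M e^{−cσ₃}). Let H₁(y) = (λa − b)·[[0, q(y)], [conj(q(y)), 0]] − (i a/2)|q(y)|²·[[1, 0], [0, −1]]. Then there exists a unique bounded continuous function μ : ℝ → M₂(ℂ) satisfying, for every x ∈ ℝ, the Volterra integral equation μ(x) = I + ∫_{−∞}^{x} e^{−i z (x − y) σ̂₃} ( e^{−(i a/2) G(y) σ̂₃} H₁(y) · μ(y) ) dy. -/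
open MeasureTheory Matrix

/-- For a scalar c and a 2×2 matrix M, `e^{c σ̂₃} M = e^{cσ₃} M e^{−cσ₃}`:
multiply the (1,2) entry by e^{2c} and the (2,1) entry by e^{−2c}. -/
noncomputable def expSigma3Conj (c : ℂ) (M : Matrix (Fin 2) (Fin 2) ℂ) :
    Matrix (Fin 2) (Fin 2) ℂ :=
  !![M 0 0, Complex.exp (2 * c) * M 0 1; Complex.exp (-2 * c) * M 1 0, M 1 1]

open Set Filter Topology BoundedContinuousFunction


section Primitive
variable {E : Type*} [NormedAddCommGroup E] [NormedSpace ℝ E]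

lemma continuous_setIntegral_Iio {φ : ℝ → E} (hφ : Integrable φ) :
    Continuous fun x => ∫ y in Set.Iio x, φ y := by
  rw [continuous_iff_continuousAt]
  intro x₀
  have key : ∀ x : ℝ, ∫ y in Set.Iio x, φ y = ∫ y, (Set.Iio x).indicator φ y := fun x =>
    (integral_indicator measurableSet_Iio).symm
  unfold ContinuousAt
  simp_rw [key]
  apply tendsto_integral_filter_of_dominated_convergence (fun y => ‖φ y‖)
  · exact Eventually.of_forall fun x => hφ.aestronglyMeasurable.indicator measurableSet_Iio
  · exact Eventually.of_forall fun x => Eventually.of_forall fun y =>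
      norm_indicator_le_norm_self φ y
  · exact hφ.norm
  · have h0 : ∀ᵐ y : ℝ, y ≠ x₀ := by
      rw [ae_iff]; simpa using measure_singleton x₀
    filter_upwards [h0] with y hy
    rcases lt_or_gt_of_ne hy with h | h
    · have hev : ∀ᶠ x : ℝ in 𝓝 x₀, (Set.Iio x).indicator φ y = φ y := by
        filter_upwards [Ioi_mem_nhds h] with x hx
        exact Set.indicator_of_mem (Set.mem_Iio.2 hx) φ
      rw [Set.indicator_of_mem (Set.mem_Iio.2 h) φ]
      exact tendsto_const_nhds.congr' (hev.mono fun x hx => hx.symm)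
    · have hev : ∀ᶠ x : ℝ in 𝓝 x₀, (Set.Iio x).indicator φ y = 0 := by
        filter_upwards [Iio_mem_nhds h] with x hx
        exact Set.indicator_of_notMem (by simpa using hx.le) φ
      rw [Set.indicator_of_notMem (by simpa using h.le) φ]
      exact tendsto_const_nhds.congr' (hev.mono fun x hx => hx.symm)

lemma tendsto_setIntegral_Iio_atTop {φ : ℝ → E} (hφ : Integrable φ) :
    Tendsto (fun x => ∫ y in Set.Iio x, φ y) atTop (𝓝 (∫ y, φ y)) := by
  have key : ∀ x : ℝ, ∫ y in Set.Iio x, φ y = ∫ y, (Set.Iio x).indicator φ y := fun x =>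
    (integral_indicator measurableSet_Iio).symm
  simp_rw [key]
  apply tendsto_integral_filter_of_dominated_convergence (fun y => ‖φ y‖)
  · exact Eventually.of_forall fun x => hφ.aestronglyMeasurable.indicator measurableSet_Iio
  · exact Eventually.of_forall fun x => Eventually.of_forall fun y =>
      norm_indicator_le_norm_self φ y
  · exact hφ.norm
  · refine Eventually.of_forall fun y => ?_
    have hev : ∀ᶠ x : ℝ in atTop, (Set.Iio x).indicator φ y = φ y := by
      filter_upwards [eventually_gt_atTop y] with x hx
      exact Set.indicator_of_mem (Set.mem_Iio.2 hx) φ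
    exact tendsto_const_nhds.congr' (hev.mono fun x hx => hx.symm)

lemma tendsto_setIntegral_Iio_atBot {φ : ℝ → E} (hφ : Integrable φ) :
    Tendsto (fun x => ∫ y in Set.Iio x, φ y) atBot (𝓝 0) := by
  have key : ∀ x : ℝ, ∫ y in Set.Iio x, φ y = ∫ y, (Set.Iio x).indicator φ y := fun x =>
    (integral_indicator measurableSet_Iio).symm
  simp_rw [key]
  have := tendsto_integral_filter_of_dominated_convergence (μ := (volume : Measure ℝ))
    (l := (atBot : Filter ℝ)) (F := fun x => (Set.Iio x).indicator φ)
    (f := fun _ => (0 : E)) (fun y => ‖φ y‖)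
    (Eventually.of_forall fun x => hφ.aestronglyMeasurable.indicator measurableSet_Iio)
    (Eventually.of_forall fun x => Eventually.of_forall fun y =>
      norm_indicator_le_norm_self φ y)
    hφ.norm
    (Eventually.of_forall fun y => by
      have hev : ∀ᶠ x : ℝ in atBot, (Set.Iio x).indicator φ y = 0 := by
        filter_upwards [eventually_lt_atBot y] with x hx
        exact Set.indicator_of_notMem (by simpa using hx.le) φ
      exact tendsto_const_nhds.congr' (hev.mono fun x hx => hx.symm))
  simpa using this

end Primitive

section W
variable {h : ℝ → ℝ} (hint : Integrable h) (hpos : ∀ y, 0 ≤ h y)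

omit hint hpos in
lemma split_Iio {f : ℝ → ℝ} (hf : Integrable f) {p x : ℝ} (hpx : p ≤ x) :
    (∫ y in Set.Iio x, f y)
      = (∫ y in Set.Iio p, f y) + ∫ y in Set.Ico p x, f y := by
  rw [← Set.Iio_union_Ico_eq_Iio hpx]
  exact setIntegral_union (by
      refine Set.disjoint_left.2 fun y hy hy' => ?_
      exact absurd hy'.1 (not_le.2 hy)) measurableSet_Ico hf.integrableOn hf.integrableOn

include hint hpos

lemma W_mono : Monotone fun x => ∫ y in Set.Iio x, h y := by
  intro x₁ x₂ hx
  refine setIntegral_mono_set hint.integrableOn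
    (Eventually.of_forall fun y => hpos y) (Eventually.of_forall ?_)
  exact fun y hy => lt_of_lt_of_le hy hx

lemma W_le_total (x : ℝ) : (∫ y in Set.Iio x, h y) ≤ ∫ y, h y :=
  setIntegral_le_integral hint (Eventually.of_forall hpos)

omit hint in
lemma setInt_nonneg (s : Set ℝ) : 0 ≤ ∫ y in s, h y :=
  integral_nonneg fun y => hpos y

omit hpos in
lemma W_Ico {p x : ℝ} (hpx : p ≤ x) :
    (∫ y in Set.Ico p x, h y)
      = (∫ y in Set.Iio x, h y) - ∫ y in Set.Iio p, h y := by
  rw [split_Iio hint hpx]; ring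

/-- The partition of `ℝ` into finitely many pieces on each of which `∫ h ≤ 1/2`. -/
lemma exists_partition :
    ∃ (m : ℕ) (t : ℕ → ℝ), Monotone t ∧
      (∫ y in Set.Iio (t 0), h y) ≤ 1/2 ∧
      (∀ j : ℕ, (∫ y in Set.Ico (t j) (t (j+1)), h y) ≤ 1/2) ∧
      (∀ x : ℝ, (∫ y in Set.Ico (t m) x, h y) ≤ 1/2) := by
  classical
  set W : ℝ → ℝ := fun x => ∫ y in Set.Iio x, h y with hW
  set S : ℝ := ∫ y, h y with hS
  have hWc : Continuous W := continuous_setIntegral_Iio hint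
  have hWm : Monotone W := W_mono hint hpos
  have hWleS : ∀ x, W x ≤ S := W_le_total hint hpos
  have hWnn : ∀ x, 0 ≤ W x := fun x => setInt_nonneg hpos _
  have hWtop : Tendsto W atTop (𝓝 S) := tendsto_setIntegral_Iio_atTop hint
  have hWbot : Tendsto W atBot (𝓝 0) := tendsto_setIntegral_Iio_atBot hint
  have hIcoS : ∀ p x : ℝ, (∫ y in Set.Ico p x, h y) ≤ S - W p := by
    intro p x
    rcases le_or_gt p x with hpx | hpx
    · rw [W_Ico hint hpx]
      show W x - W p ≤ S - W p
      linarith [hWleS x]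
    · rw [Set.Ico_eq_empty (not_lt.2 hpx.le)]
      simp only [Measure.restrict_empty, integral_zero_measure]
      linarith [hWleS p]
  rcases le_or_gt S (1/2) with hSle | hSgt
  · refine ⟨0, fun _ => 0, monotone_const, le_trans (hWleS 0) hSle, fun j => ?_, fun x => ?_⟩
    · exact le_trans (le_trans (hIcoS 0 0) (by linarith [hWnn 0])) hSle
    · exact le_trans (le_trans (hIcoS 0 x) (by linarith [hWnn 0])) hSle
  · -- S > 1/2
    have hSpos : 0 < S := lt_trans (by norm_num) hSgt
    set N : ℕ := ⌈2 * S⌉₊ with hN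
    have hNge : 2 * S ≤ (N : ℝ) := Nat.le_ceil _
    have hN2 : 2 ≤ N := by
      have h1 : (1 : ℝ) < (N : ℝ) := lt_of_lt_of_le (by linarith) hNge
      exact_mod_cast h1
    have hNpos : (0 : ℝ) < N := by positivity
    have hSN : S / N ≤ 1/2 := by
      rw [div_le_iff₀ hNpos]; linarith
    set v : ℕ → ℝ := fun j => (min (j+1) (N-1) : ℕ) * S / N with hv
    have hcast : ∀ j : ℕ, ((min (j+1) (N-1) : ℕ) : ℝ) ≤ (N : ℝ) - 1 := by
      intro j
      have h2 : ((min (j+1) (N-1) : ℕ) : ℝ) ≤ ((N - 1 : ℕ) : ℝ) := by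
        exact_mod_cast min_le_right (j+1) (N-1)
      rwa [Nat.cast_sub (by omega), Nat.cast_one] at h2
    have hvpos : ∀ j, 0 < v j := by
      intro j
      have h1 : (0:ℝ) < ((min (j+1) (N-1) : ℕ) : ℝ) := by
        have : 1 ≤ min (j+1) (N-1) := le_min (Nat.succ_le_succ (Nat.zero_le _)) (by omega)
        exact_mod_cast Nat.lt_of_lt_of_le Nat.zero_lt_one this
      rw [hv]; positivity
    have hvltS : ∀ j, v j < S := by
      intro j
      rw [hv]
      calc ((min (j+1) (N-1) : ℕ) : ℝ) * S / N ≤ ((N:ℝ) - 1) * S / N := by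
            gcongr; exact hcast j
        _ < S := by rw [div_lt_iff₀ hNpos]; nlinarith
    have hvmono : Monotone v := by
      intro j k hjk
      simp only [hv]
      gcongr <;> first
        | exact hSpos.le
        | exact_mod_cast Nat.min_le_min (by omega) le_rfl
    have hvdiff : ∀ j, v (j+1) ≤ v j + S / N := by
      intro j
      rw [hv]
      have h1 : ((min (j+1+1) (N-1) : ℕ) : ℝ) ≤ ((min (j+1) (N-1) : ℕ) : ℝ) + 1 := by
        have : min (j+1+1) (N-1) ≤ min (j+1) (N-1) + 1 := by omega
        exact_mod_cast this
      calc ((min (j+1+1) (N-1) : ℕ) : ℝ) * S / N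
          ≤ (((min (j+1) (N-1) : ℕ) : ℝ) + 1) * S / N := by gcongr
        _ = ((min (j+1) (N-1) : ℕ) : ℝ) * S / N + S / N := by ring
    -- existence of points and bddBelow
    have hne : ∀ j, {x | v j ≤ W x}.Nonempty := by
      intro j
      obtain ⟨x, hx⟩ := (hWtop.eventually (eventually_gt_nhds (hvltS j))).exists
      exact ⟨x, hx.le⟩
    have hbdd : ∀ j, BddBelow {x | v j ≤ W x} := by
      intro j
      obtain ⟨x₀, hx₀⟩ := (hWbot.eventually (eventually_lt_nhds (hvpos j))).exists
      refine ⟨x₀, fun x hx => ?_⟩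
      by_contra hc
      exact absurd (le_trans hx (hWm (le_of_not_ge hc))) (not_le.2 hx₀)
    set t : ℕ → ℝ := fun j => sInf {x | v j ≤ W x} with ht
    have hWt : ∀ j, W (t j) = v j := by
      intro j
      have hcl : IsClosed {x | v j ≤ W x} := isClosed_Ici.preimage hWc
      have hmem := hcl.csInf_mem (hne j) (hbdd j)
      refine le_antisymm ?_ hmem
      have hlt : ∀ x, x < t j → W x ≤ v j := by
        intro x hx
        have hxs : x ∉ {y | v j ≤ W y} := notMem_of_lt_csInf hx (hbdd j)
        exact le_of_lt (not_le.1 hxs)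
      refine le_of_tendsto (hWc.continuousAt.mono_left (nhdsWithin_le_nhds (s := Set.Iio (t j)))) ?_
      filter_upwards [self_mem_nhdsWithin] with x hx using hlt x hx
    have htmono : Monotone t := by
      intro j k hjk
      exact csInf_le_csInf (hbdd j) (hne k) (fun x hx => le_trans (hvmono hjk) hx)
    refine ⟨N-2, t, htmono, ?_, ?_, ?_⟩
    · show W (t 0) ≤ 1/2
      rw [hWt 0]
      have : min (0+1) (N-1) = 1 := by omega
      calc v 0 = S / N := by rw [hv]; simp only [this, Nat.cast_one, one_mul]
        _ ≤ 1/2 := hSN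
    · intro j
      rw [W_Ico hint (htmono (Nat.le_succ j))]
      show W (t (j+1)) - W (t j) ≤ 1/2
      rw [hWt, hWt]
      linarith [hvdiff j]
    · intro x
      refine le_trans (hIcoS (t (N-2)) x) ?_
      rw [hWt]
      have hmin : min (N-2+1) (N-1) = N - 1 := by omega
      have : v (N-2) = ((N - 1 : ℕ) : ℝ) * S / N := by simp only [hv]; rw [hmin]
      rw [this, Nat.cast_sub (by omega), Nat.cast_one]
      have : S - ((N:ℝ) - 1) * S / N = S / N := by field_simp; ring
      rw [this]
      exact hSN
end W


noncomputable def aSeq : ℕ → ℕ → ℝ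
  | 0, _ => 1
  | (n+1), i => (1/2) * ∑ j ∈ Finset.range (i+1), aSeq n j

lemma aSeq_nonneg : ∀ n i, 0 ≤ aSeq n i := by
  intro n
  induction n with
  | zero => intro i; simp [aSeq]
  | succ n ih =>
    intro i
    simp only [aSeq]
    exact mul_nonneg (by norm_num) (Finset.sum_nonneg fun j _ => ih j)

lemma aSeq_mono (n : ℕ) : Monotone (aSeq n) := by
  cases n with
  | zero => exact fun i j _ => le_rfl
  | succ n =>
    intro i j hij
    simp only [aSeq]
    apply mul_le_mul_of_nonneg_left ?_ (by norm_num : (0:ℝ) ≤ 1/2)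
    exact Finset.sum_le_sum_of_subset_of_nonneg
      (Finset.range_subset_range.2 (Nat.succ_le_succ hij)) (fun k _ _ => aSeq_nonneg n k)

lemma hockey (n : ℕ) : ∀ i : ℕ, ∑ j ∈ Finset.range (i+1), (n + j).choose j = (n + i + 1).choose i := by
  intro i
  induction i with
  | zero => simp
  | succ i ih =>
    rw [Finset.sum_range_succ, ih]
    exact (Nat.choose_succ_succ' (n+i+1) i).symm

lemma aSeq_le (n : ℕ) : ∀ i : ℕ, aSeq n i ≤ (1/2)^n * ((n + i).choose i : ℕ) := by
  induction n with
  | zero => intro i; simp [aSeq]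
  | succ n ih =>
    intro i
    simp only [aSeq]
    calc (1/2) * ∑ j ∈ Finset.range (i+1), aSeq n j
        ≤ (1/2) * ∑ j ∈ Finset.range (i+1), ((1/2:ℝ)^n * ((n + j).choose j : ℕ)) := by
          gcongr with j hj
          exact ih j
      _ = (1/2)^(n+1) * ((∑ j ∈ Finset.range (i+1), ((n + j).choose j : ℕ) : ℝ)) := by
          rw [← Finset.mul_sum]; ring
      _ = (1/2)^(n+1) * (((n + i + 1).choose i : ℕ) : ℝ) := by
          rw [← Nat.cast_sum, hockey n i]
      _ ≤ (1/2)^(n+1) * (((n + 1 + i).choose i : ℕ) : ℝ) := by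
          have : n + i + 1 = n + 1 + i := by omega
          rw [this]

lemma exists_aSeq_lt_one (M : ℕ) : ∃ n : ℕ, aSeq n M < 1 := by
  have h1 : Tendsto (fun n : ℕ => ((n:ℝ))^M * (1/2:ℝ)^n) atTop (𝓝 0) :=
    (summable_pow_mul_geometric_of_norm_lt_one M
      (by rw [Real.norm_eq_abs, abs_of_pos] <;> norm_num : ‖(1/2:ℝ)‖ < 1)).tendsto_atTop_zero
  have h2 : Tendsto (fun n : ℕ => (((n+M:ℕ):ℝ))^M * (1/2:ℝ)^(n+M)) atTop (𝓝 0) :=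
    h1.comp (tendsto_add_atTop_nat M)
  have h3 : Tendsto (fun n : ℕ => (2:ℝ)^M * ((((n+M:ℕ):ℝ))^M * (1/2:ℝ)^(n+M))) atTop (𝓝 0) := by
    have := h2.const_mul ((2:ℝ)^M)
    rwa [mul_zero] at this
  have h4 := (h3.eventually (eventually_lt_nhds (by norm_num : (0:ℝ) < 1))).exists
  obtain ⟨n, hn⟩ := h4
  refine ⟨n, lt_of_le_of_lt ?_ hn⟩
  calc aSeq n M ≤ (1/2)^n * ((n + M).choose M : ℕ) := aSeq_le n M
    _ ≤ (1/2)^n * (((n + M)^M : ℕ) : ℝ) := by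
        gcongr
        exact_mod_cast Nat.choose_le_pow (n+M) M
    _ = (2:ℝ)^M * ((((n+M:ℕ):ℝ))^M * (1/2:ℝ)^(n+M)) := by
        have h2M : (2:ℝ)^M * (1/2:ℝ)^M = 1 := by rw [← mul_pow]; norm_num
        push_cast
        rw [pow_add]
        calc ((1/2:ℝ))^n * ((n:ℝ)+M)^M
            = ((2:ℝ)^M * (1/2)^M) * ((1/2)^n * ((n:ℝ)+M)^M) := by rw [h2M]; ring
          _ = 2^M * (((n:ℝ)+M)^M * ((1/2)^n * (1/2)^M)) := by ring

section Volterra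
variable {E : Type*} [NormedAddCommGroup E] [NormedSpace ℝ E] [CompleteSpace E]
variable {Ψ : ℝ → ℝ → E → E} {h : ℝ → ℝ} {v₀ : E}
variable (hint : Integrable h) (hpos : ∀ y, 0 ≤ h y)
variable (hΨ0 : ∀ x y, Ψ x y 0 = 0)
variable (hΨlip : ∀ x y u v, ‖Ψ x y u - Ψ x y v‖ ≤ h y * ‖u - v‖)
variable (hΨmeas : ∀ μ : ℝ → E, Continuous μ → (∃ C, ∀ x, ‖μ x‖ ≤ C) →
  ∀ x : ℝ, AEStronglyMeasurable (fun y => Ψ x y (μ y)) (volume.restrict (Set.Iio x)))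
variable (hΨcont : ∀ μ : ℝ → E, Continuous μ → (∃ C, ∀ x, ‖μ x‖ ≤ C) →
  Continuous (fun x => ∫ y in Set.Iio x, Ψ x y (μ y)))

lemma aSeq_succ_succ (n i : ℕ) :
    aSeq (n+1) (i+1) = aSeq (n+1) i + 1/2 * aSeq n (i+1) := by
  show (1/2) * ∑ j ∈ Finset.range (i+1+1), aSeq n j
    = (1/2) * ∑ j ∈ Finset.range (i+1), aSeq n j + 1/2 * aSeq n (i+1)
  rw [Finset.sum_range_succ]; ring

include hint hpos hΨ0 hΨlip hΨmeas hΨcont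

theorem volterra_exists_unique :
    ∃! μ : ℝ → E, Continuous μ ∧ (∃ C, ∀ x, ‖μ x‖ ≤ C) ∧
      ∀ x, μ x = v₀ + ∫ y in Set.Iio x, Ψ x y (μ y) := by
  classical
  -- basic bound for Ψ
  have hbound : ∀ x y (u : E), ‖Ψ x y u‖ ≤ h y * ‖u‖ := by
    intro x y u
    have := hΨlip x y u 0
    simpa [hΨ0 x y] using this
  -- integrability of the integrand for a bounded continuous μ
  have hInt : ∀ (μ : ℝ → E), Continuous μ → ∀ C : ℝ, (∀ x, ‖μ x‖ ≤ C) →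
      ∀ x : ℝ, IntegrableOn (fun y => Ψ x y (μ y)) (Set.Iio x) := by
    intro μ hc C hC x
    refine Integrable.mono' ((hint.mul_const C).restrict (s := Set.Iio x))
      (hΨmeas μ hc ⟨C, hC⟩ x) (Eventually.of_forall fun y => ?_)
    exact le_trans (hbound x y (μ y)) (mul_le_mul_of_nonneg_left (hC y) (hpos y))
  -- the operator T
  set T : (ℝ →ᵇ E) → (ℝ →ᵇ E) := fun μ =>
    ofNormedAddCommGroup (fun x => v₀ + ∫ y in Set.Iio x, Ψ x y (μ y))
      (continuous_const.add (hΨcont ⇑μ μ.continuous ⟨‖μ‖, fun x => μ.norm_coe_le_norm x⟩))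
      (‖v₀‖ + ∫ y, h y * ‖μ‖)
      (by
        intro x
        refine le_trans (norm_add_le _ _) (add_le_add le_rfl ?_)
        refine le_trans (norm_integral_le_integral_norm _) ?_
        refine le_trans (integral_mono_of_nonneg (Eventually.of_forall fun y => norm_nonneg _)
          ((hint.mul_const ‖μ‖).restrict (s := Set.Iio x))
          (Eventually.of_forall fun y => le_trans (hbound x y (μ y))
            (mul_le_mul_of_nonneg_left (μ.norm_coe_le_norm y) (hpos y)))) ?_
        exact setIntegral_le_integral (hint.mul_const ‖μ‖)
          (Eventually.of_forall fun y => mul_nonneg (hpos y) (norm_nonneg _))) with hT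
  have hTapp : ∀ (μ : ℝ →ᵇ E) (x : ℝ), T μ x = v₀ + ∫ y in Set.Iio x, Ψ x y (μ y) := by
    intro μ x; rw [hT]; rfl
  -- integrability of h * ‖μ - ν‖
  have hgInt : ∀ (μ ν : ℝ →ᵇ E), Integrable (fun y => h y * ‖μ y - ν y‖) := by
    intro μ ν
    have hmeas : AEStronglyMeasurable (fun y => h y * ‖μ y - ν y‖) volume :=
      hint.aestronglyMeasurable.mul ((μ.continuous.sub ν.continuous).norm.aestronglyMeasurable)
    refine Integrable.mono' (hint.mul_const (dist μ ν)) hmeas (Eventually.of_forall fun y => ?_)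
    rw [Real.norm_eq_abs, abs_of_nonneg (mul_nonneg (hpos y) (norm_nonneg _))]
    refine mul_le_mul_of_nonneg_left ?_ (hpos y)
    rw [← dist_eq_norm]
    exact dist_coe_le_dist y
  -- key distance estimate
  have hTdiff : ∀ (μ ν : ℝ →ᵇ E) (x : ℝ),
      ‖T μ x - T ν x‖ ≤ ∫ y in Set.Iio x, h y * ‖μ y - ν y‖ := by
    intro μ ν x
    have hμ := hInt ⇑μ μ.continuous ‖μ‖ (fun s => μ.norm_coe_le_norm s) x
    have hν := hInt ⇑ν ν.continuous ‖ν‖ (fun s => ν.norm_coe_le_norm s) x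
    rw [hTapp, hTapp]
    have heq : v₀ + (∫ y in Set.Iio x, Ψ x y (μ y)) - (v₀ + ∫ y in Set.Iio x, Ψ x y (ν y))
        = ∫ y in Set.Iio x, (Ψ x y (μ y) - Ψ x y (ν y)) := by
      rw [integral_sub hμ hν]; abel
    rw [heq]
    refine le_trans (norm_integral_le_integral_norm _) ?_
    exact integral_mono_of_nonneg (Eventually.of_forall fun y => norm_nonneg _)
      ((hgInt μ ν).restrict) (Eventually.of_forall fun y => hΨlip x y (μ y) (ν y))
  -- the partition
  obtain ⟨m, t, htm, hpart0, hpartstep, hparttail⟩ := exists_partition hint hpos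
  -- the main iterated estimate
  have main : ∀ n i, ∀ (μ ν : ℝ →ᵇ E) (x : ℝ), (x ≤ t i ∨ m + 1 ≤ i) →
      ‖(T^[n] μ) x - (T^[n] ν) x‖ ≤ aSeq n i * dist μ ν := by
    intro n
    induction n with
    | zero =>
      intro i μ ν x _
      simp only [Function.iterate_zero, id_eq]
      rw [show aSeq 0 i = 1 from rfl, one_mul, ← dist_eq_norm]
      exact dist_coe_le_dist x
    | succ n ih =>
      intro i μ ν x hx
      set g : ℝ → ℝ := fun y => h y * ‖(T^[n] μ) y - (T^[n] ν) y‖ with hgdef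
      have hgi : Integrable g := hgInt _ _
      have hgnn : ∀ y, 0 ≤ g y := fun y => mul_nonneg (hpos y) (norm_nonneg _)
      have hgle : ∀ j y, (y ≤ t j ∨ m + 1 ≤ j) → g y ≤ h y * (aSeq n j * dist μ ν) :=
        fun j y hy => mul_le_mul_of_nonneg_left (ih j μ ν y hy) (hpos y)
      have Q : ∀ j, (∫ y in Set.Iio (t j), g y) ≤ aSeq (n+1) j * dist μ ν := by
        intro j
        induction j with
        | zero =>
          have hc : (∫ y in Set.Iio (t 0), g y)
              ≤ ∫ y in Set.Iio (t 0), h y * (aSeq n 0 * dist μ ν) :=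
            setIntegral_mono_on hgi.integrableOn ((hint.mul_const _).integrableOn)
              measurableSet_Iio (fun y hy => hgle 0 y (Or.inl (le_of_lt hy)))
          have hc2 : (∫ y in Set.Iio (t 0), h y * (aSeq n 0 * dist μ ν))
              = (∫ y in Set.Iio (t 0), h y) * (aSeq n 0 * dist μ ν) :=
            integral_mul_const _ _
          have hc3 : (∫ y in Set.Iio (t 0), h y) * (aSeq n 0 * dist μ ν)
              ≤ (1/2) * (aSeq n 0 * dist μ ν) :=
            mul_le_mul_of_nonneg_right hpart0
              (mul_nonneg (aSeq_nonneg n 0) dist_nonneg)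
          have hc4 : aSeq (n+1) 0 = 1/2 * aSeq n 0 := by
            show (1/2) * ∑ k ∈ Finset.range 1, aSeq n k = 1/2 * aSeq n 0
            rw [Finset.sum_range_one]
          calc (∫ y in Set.Iio (t 0), g y) ≤ (1/2) * (aSeq n 0 * dist μ ν) := by
                rw [hc2] at hc; exact le_trans hc hc3
            _ = aSeq (n+1) 0 * dist μ ν := by rw [hc4]; ring
        | succ j ihQ =>
          rw [split_Iio hgi (htm (Nat.le_succ j))]
          have h2 : (∫ y in Set.Ico (t j) (t (j+1)), g y)
              ≤ (aSeq n (j+1) * dist μ ν) * (1/2) := by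
            have hc : (∫ y in Set.Ico (t j) (t (j+1)), g y)
                ≤ ∫ y in Set.Ico (t j) (t (j+1)), h y * (aSeq n (j+1) * dist μ ν) :=
              setIntegral_mono_on hgi.integrableOn ((hint.mul_const _).integrableOn)
                measurableSet_Ico (fun y hy => hgle (j+1) y (Or.inl hy.2.le))
            rw [integral_mul_const] at hc
            refine le_trans hc ?_
            rw [mul_comm]
            exact mul_le_mul_of_nonneg_left (hpartstep j)
              (mul_nonneg (aSeq_nonneg n (j+1)) dist_nonneg)
          have heq : aSeq (n+1) (j+1) * dist μ ν
              = aSeq (n+1) j * dist μ ν + (aSeq n (j+1) * dist μ ν) * (1/2) := by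
            rw [aSeq_succ_succ n j]; ring
          linarith [ihQ, h2]
      have hmain : ‖(T^[n+1] μ) x - (T^[n+1] ν) x‖ ≤ ∫ y in Set.Iio x, g y := by
        rw [Function.iterate_succ_apply', Function.iterate_succ_apply']
        exact hTdiff _ _ x
      rcases i with _ | i
      · have hx0 : x ≤ t 0 := hx.resolve_right (by omega)
        refine le_trans hmain (le_trans ?_ (Q 0))
        exact setIntegral_mono_set hgi.integrableOn (Eventually.of_forall hgnn)
          (Eventually.of_forall fun y hy => lt_of_lt_of_le hy hx0)
      · rcases le_or_gt x (t i) with hxi | hxi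
        · refine le_trans hmain (le_trans ?_ (le_trans (Q i) ?_))
          · exact setIntegral_mono_set hgi.integrableOn (Eventually.of_forall hgnn)
              (Eventually.of_forall fun y hy => lt_of_lt_of_le hy hxi)
          · exact mul_le_mul_of_nonneg_right (aSeq_mono (n+1) (Nat.le_succ i)) dist_nonneg
        · have h2 : (∫ y in Set.Ico (t i) x, g y)
              ≤ (aSeq n (i+1) * dist μ ν) * (1/2) := by
            have hyb : ∀ y ∈ Set.Ico (t i) x, g y ≤ h y * (aSeq n (i+1) * dist μ ν) := by
              intro y hy
              apply hgle (i+1) y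
              rcases hx with hx | hx
              · exact Or.inl (le_trans hy.2.le hx)
              · exact Or.inr hx
            have hc := setIntegral_mono_on hgi.integrableOn
              ((hint.mul_const _).integrableOn) measurableSet_Ico hyb
            rw [integral_mul_const] at hc
            refine le_trans hc ?_
            rw [mul_comm]
            refine mul_le_mul_of_nonneg_left ?_
              (mul_nonneg (aSeq_nonneg n (i+1)) dist_nonneg)
            rcases hx with hx | hx
            · refine le_trans (setIntegral_mono_set hint.integrableOn
                (Eventually.of_forall hpos) (Eventually.of_forall fun y hy => ?_)) (hpartstep i)
              exact ⟨hy.1, lt_of_lt_of_le hy.2 hx⟩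
            · have hmi : t m ≤ t i := htm (by omega)
              refine le_trans (setIntegral_mono_set hint.integrableOn
                (Eventually.of_forall hpos) (Eventually.of_forall fun y hy => ?_)) (hparttail x)
              exact ⟨le_trans hmi hy.1, hy.2⟩
          calc ‖(T^[n+1] μ) x - (T^[n+1] ν) x‖ ≤ ∫ y in Set.Iio x, g y := hmain
            _ = (∫ y in Set.Iio (t i), g y) + ∫ y in Set.Ico (t i) x, g y :=
                split_Iio hgi hxi.le
            _ ≤ aSeq (n+1) i * dist μ ν + (aSeq n (i+1) * dist μ ν) * (1/2) :=
                add_le_add (Q i) h2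
            _ = aSeq (n+1) (i+1) * dist μ ν := by rw [aSeq_succ_succ n i]; ring
  -- Lipschitz estimate for iterates
  have hLip : ∀ n (μ ν : ℝ →ᵇ E), dist (T^[n] μ) (T^[n] ν) ≤ aSeq n (m+1) * dist μ ν := by
    intro n μ ν
    rw [BoundedContinuousFunction.dist_le (mul_nonneg (aSeq_nonneg n (m+1)) dist_nonneg)]
    intro x
    rw [dist_eq_norm]
    exact main n (m+1) μ ν x (Or.inr le_rfl)
  obtain ⟨n₀, hn₀⟩ := exists_aSeq_lt_one (m+1)
  set K : ℝ := aSeq n₀ (m+1) with hK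
  have hK0 : 0 ≤ K := aSeq_nonneg _ _
  have hcontr : ContractingWith K.toNNReal (T^[n₀]) := by
    constructor
    · rw [← Real.toNNReal_one]
      exact (Real.toNNReal_lt_toNNReal_iff one_pos).2 hn₀
    · refine LipschitzWith.of_dist_le_mul fun μ ν => ?_
      rw [Real.coe_toNNReal K hK0]
      exact hLip n₀ μ ν
  have hfix : Function.IsFixedPt T (hcontr.fixedPoint (T^[n₀])) :=
    hcontr.isFixedPt_fixedPoint_iterate
  set μs : ℝ →ᵇ E := hcontr.fixedPoint (T^[n₀]) with hμs
  have huniq : ∀ ρ : ℝ →ᵇ E, Function.IsFixedPt T ρ → ρ = μs :=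
    fun ρ hρ => hcontr.fixedPoint_unique (hρ.iterate n₀)
  refine ⟨⇑μs, ⟨μs.continuous, ⟨‖μs‖, fun x => μs.norm_coe_le_norm x⟩, fun x => ?_⟩, ?_⟩
  · conv_lhs => rw [← hfix]
    exact hTapp μs x
  · rintro ρ ⟨hρc, ⟨C, hC⟩, hρeq⟩
    set ρ' : ℝ →ᵇ E := ofNormedAddCommGroup ρ hρc C hC with hρ'
    have hρ'fix : Function.IsFixedPt T ρ' := by
      show T ρ' = ρ'
      ext x
      rw [hTapp]
      exact (hρeq x).symm
    have hr := huniq ρ' hρ'fix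
    calc ρ = ⇑ρ' := rfl
      _ = ⇑μs := by rw [hr]

end Volterra


lemma expS_00 (c : ℂ) (M : Matrix (Fin 2) (Fin 2) ℂ) : expSigma3Conj c M 0 0 = M 0 0 := by
  simp [expSigma3Conj]
lemma expS_01 (c : ℂ) (M : Matrix (Fin 2) (Fin 2) ℂ) :
    expSigma3Conj c M 0 1 = Complex.exp (2*c) * M 0 1 := by simp [expSigma3Conj]
lemma expS_10 (c : ℂ) (M : Matrix (Fin 2) (Fin 2) ℂ) :
    expSigma3Conj c M 1 0 = Complex.exp (-2*c) * M 1 0 := by simp [expSigma3Conj]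
lemma expS_11 (c : ℂ) (M : Matrix (Fin 2) (Fin 2) ℂ) : expSigma3Conj c M 1 1 = M 1 1 := by
  simp [expSigma3Conj]

lemma integral_apply₂ {α : Type*} [MeasurableSpace α] {μm : Measure α}
    {f : α → (Fin 2 → Fin 2 → ℂ)} (hf : Integrable f μm) (i j : Fin 2) :
    (∫ a, f a ∂μm) i j = ∫ a, f a i j ∂μm := by
  have h1 : (∫ a, f a ∂μm) i = ∫ a, f a i ∂μm := by
    have := (ContinuousLinearMap.proj (R := ℂ) (φ := fun _ : Fin 2 => Fin 2 → ℂ)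
      i).integral_comp_comm hf
    simpa using this.symm
  rw [h1]
  have h2 := (ContinuousLinearMap.proj (R := ℂ) (φ := fun _ : Fin 2 => ℂ) j).integral_comp_comm
    ((ContinuousLinearMap.proj (R := ℂ) (φ := fun _ : Fin 2 => Fin 2 → ℂ) i).integrable_comp hf)
  simpa using h2.symm

/-- Continuity of `x ↦ ∫_{(-∞,x)} e^{w(x-y)} B(y) dy` for `w` purely imaginary. -/
lemma cont_aux {B : ℝ → ℂ} (w : ℂ) (hw : w.re = 0) (hB : Integrable B) :
    Continuous fun x : ℝ => ∫ y in Set.Iio x, Complex.exp (w * ((x:ℂ) - (y:ℂ))) * B y := by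
  have hexp1 : ∀ c : ℂ, c.re = 0 → ‖Complex.exp c‖ = 1 := by
    intro c hc
    rw [Complex.norm_exp, hc, Real.exp_zero]
  have hInt : Integrable fun y : ℝ => Complex.exp (-w * y) * B y := by
    refine Integrable.mono' hB.norm ((Complex.continuous_exp.comp
        (by continuity)).aestronglyMeasurable.mul hB.aestronglyMeasurable)
      (Eventually.of_forall fun y => le_of_eq ?_)
    rw [norm_mul, hexp1 _ (by simp [Complex.mul_re, hw]), one_mul]
  have key : ∀ x : ℝ, (∫ y in Set.Iio x, Complex.exp (w * ((x:ℂ) - (y:ℂ))) * B y)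
      = Complex.exp (w * x) * ∫ y in Set.Iio x, Complex.exp (-w * y) * B y := by
    intro x
    rw [← integral_const_mul]
    refine setIntegral_congr_fun measurableSet_Iio fun y _ => ?_
    rw [← mul_assoc, ← Complex.exp_add]
    congr 2
    ring
  simp_rw [key]
  exact (Complex.continuous_exp.comp (by continuity)).mul (continuous_setIntegral_Iio hInt)
/-- Proposition 2.1 (existence and uniqueness of the Jost solution μ₋ at a real
spectral parameter λ): there is a unique bounded continuous solution of the
Volterra integral equation μ(x) = I + ∫_{−∞}^x e^{−iz(x−y)σ̂₃}(e^{−(ia/2)G(y)σ̂₃}H₁(y)·μ(y)) dy. -/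
theorem jost_solution_exists_unique (a b : ℝ) (q : ℝ → ℂ) (hqm : Measurable q)
    (hq1 : Integrable q) (hq2 : MemLp q 2) (lam : ℝ)
    (z : ℝ) (hz : z = lam * (a * lam - 2 * b))
    (G : ℝ → ℝ) (hG : ∀ y : ℝ, G y = ∫ s in Set.Iio y, ‖q s‖ ^ 2)
    (H₁ : ℝ → Matrix (Fin 2) (Fin 2) ℂ)
    (hH₁ : ∀ y : ℝ, H₁ y =
      ((lam * a - b : ℝ) : ℂ) • !![0, q y; (starRingEnd ℂ) (q y), 0] -
        (Complex.I * (a : ℂ) / 2 * ((‖q y‖ ^ 2 : ℝ) : ℂ)) • !![(1:ℂ), 0; 0, -1]) :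
    ∃! μ : ℝ → Matrix (Fin 2) (Fin 2) ℂ,
      Continuous μ ∧
      (∃ C : ℝ, ∀ (x : ℝ) (i j : Fin 2), ‖μ x i j‖ ≤ C) ∧
      ∀ (x : ℝ) (i j : Fin 2),
        μ x i j = (1 : Matrix (Fin 2) (Fin 2) ℂ) i j +
          ∫ y in Set.Iio x,
            (expSigma3Conj (-(Complex.I * (z : ℂ)) * ((x : ℂ) - (y : ℂ)))
              ((expSigma3Conj (-(Complex.I * (a : ℂ) / 2) * ((G y : ℝ) : ℂ)) (H₁ y)) * μ y)) i j := by
  classical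
  set g : ℝ → ℝ := fun y => |lam * a - b| * ‖q y‖ + |a| / 2 * ‖q y‖ ^ 2
    with hgdef
  have habs : Integrable (fun y => ‖q y‖) := by
    exact hq1.norm
  have hsq : Integrable (fun y => ‖q y‖ ^ 2) := by
    have h2 := hq2.integrable_norm_rpow (by norm_num) (by norm_num)
    have he : (fun x => ‖q x‖ ^ ((2:ENNReal)).toReal) = fun x => ‖q x‖ ^ 2 := by
      funext x
      rw [show ((2:ENNReal)).toReal = (2:ℝ) by norm_num, show (2:ℝ) = ((2:ℕ):ℝ) by norm_num,
        Real.rpow_natCast]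
    rwa [he] at h2
  have hgint : Integrable g := (habs.const_mul _).add (hsq.const_mul _)
  have hgnn : ∀ y, 0 ≤ g y := by
    intro y
    have h1 : (0:ℝ) ≤ |lam * a - b| * ‖q y‖ := by positivity
    have h2 : (0:ℝ) ≤ |a| / 2 * ‖q y‖ ^ 2 := by positivity
    simp only [hgdef]
    linarith
  set h : ℝ → ℝ := fun y => 2 * g y with hhdef
  have hint : Integrable h := hgint.const_mul 2
  have hpos : ∀ y, 0 ≤ h y := fun y => mul_nonneg (by norm_num) (hgnn y)
  have hGcont : Continuous G := (continuous_setIntegral_Iio hsq).congr fun y => (hG y).symm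
  -- entry bounds for H₁
  have hH1abs : ∀ y (i k : Fin 2), ‖H₁ y i k‖ ≤ g y := by
    intro y i k
    have hq2' : (0:ℝ) ≤ ‖q y‖ ^ 2 := by positivity
    have h1 : (0:ℝ) ≤ |lam * a - b| * ‖q y‖ := by positivity
    have h2 : (0:ℝ) ≤ |a| / 2 * ‖q y‖ ^ 2 := by positivity
    have habsr : ‖(lam:ℂ) * (a:ℂ) - (b:ℂ)‖ = |lam * a - b| := by
      rw [← Complex.ofReal_mul, ← Complex.ofReal_sub, Complex.norm_real, Real.norm_eq_abs]
    simp only [hgdef]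
    rw [hH₁ y]
    fin_cases i <;> fin_cases k <;>
      simp [Matrix.sub_apply, Matrix.smul_apply, smul_eq_mul, norm_mul, norm_div,
        Complex.norm_I, Complex.norm_real, Complex.norm_two, abs_of_nonneg hq2',
        Complex.norm_conj] <;>
      nlinarith [norm_nonneg (q y), abs_nonneg (lam*a-b), abs_nonneg a, habsr]
  -- measurability of H₁ entries
  have hH1meas : ∀ (i k : Fin 2), Measurable fun y => H₁ y i k := by
    intro i k
    have hconj : Measurable fun y => (starRingEnd ℂ) (q y) := Complex.continuous_conj.measurable.comp hqm
    have habsm' : Measurable fun y => (((‖q y‖ : ℝ)):ℂ) ^ 2 :=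
      (Complex.continuous_ofReal.measurable.comp
        (continuous_norm.measurable.comp hqm)).pow_const 2
    simp only [hH₁]
    fin_cases i <;> fin_cases k <;>
      simp [Matrix.sub_apply, Matrix.smul_apply, smul_eq_mul]
    · exact habsm'.const_mul _
    · exact hqm.const_mul _
    · exact hconj.const_mul _
    · exact habsm'.const_mul _
  -- the matrix A
  set A : ℝ → Matrix (Fin 2) (Fin 2) ℂ := fun y =>
    expSigma3Conj (-(Complex.I * (a:ℂ) / 2) * ((G y : ℝ):ℂ)) (H₁ y) with hAdef
  have hc2re : ∀ y, ((-(Complex.I * (a:ℂ) / 2) * ((G y : ℝ):ℂ)).re) = 0 := fun y => by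
    simp [Complex.mul_re, Complex.div_re]
  have hexpabs : ∀ c : ℂ, c.re = 0 → ‖Complex.exp c‖ = 1 := by
    intro c hc
    rw [Complex.norm_exp, hc, Real.exp_zero]
  have hAabs : ∀ y (i k : Fin 2), ‖A y i k‖ ≤ g y := by
    intro y i k
    have := hH1abs y i k
    simp only [hAdef]
    fin_cases i <;> fin_cases k <;>
      simp only [Fin.mk_zero, Fin.mk_one, Fin.isValue, expS_00, expS_01, expS_10, expS_11, norm_mul]
    · exact hH1abs y 0 0
    · rw [hexpabs _ (by simp [Complex.mul_re, Complex.div_re]), one_mul]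
      exact hH1abs y 0 1
    · rw [hexpabs _ (by simp [Complex.mul_re, Complex.div_re]), one_mul]
      exact hH1abs y 1 0
    · exact hH1abs y 1 1
  have hAmeas : ∀ (i k : Fin 2), Measurable fun y => A y i k := by
    intro i k
    have hc2m : Measurable fun y => (-(Complex.I * (a:ℂ) / 2) * ((G y : ℝ):ℂ)) :=
      (Complex.continuous_ofReal.comp hGcont).measurable.const_mul _
    have he1 : Measurable fun y => Complex.exp (2 * (-(Complex.I * (a:ℂ) / 2) * ((G y : ℝ):ℂ))) :=
      Complex.continuous_exp.measurable.comp (hc2m.const_mul 2)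
    have he2 : Measurable fun y => Complex.exp (-2 * (-(Complex.I * (a:ℂ) / 2) * ((G y : ℝ):ℂ))) :=
      Complex.continuous_exp.measurable.comp (hc2m.const_mul (-2))
    simp only [hAdef]
    fin_cases i <;> fin_cases k <;>
      simp only [Fin.mk_zero, Fin.mk_one, Fin.isValue, expS_00, expS_01, expS_10, expS_11]
    · exact hH1meas 0 0
    · exact he1.mul (hH1meas 0 1)
    · exact he2.mul (hH1meas 1 0)
    · exact hH1meas 1 1
  -- exponent matrix
  set w : Matrix (Fin 2) (Fin 2) ℂ :=
    !![0, -(2 * Complex.I * (z:ℂ)); 2 * Complex.I * (z:ℂ), 0] with hwdef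
  have hw00 : w 0 0 = 0 := by simp [hwdef]
  have hw01 : w 0 1 = -(2 * Complex.I * (z:ℂ)) := by simp [hwdef]
  have hw10 : w 1 0 = 2 * Complex.I * (z:ℂ) := by simp [hwdef]
  have hw11 : w 1 1 = 0 := by simp [hwdef]
  have hwre : ∀ i j, (w i j).re = 0 := by
    intro i j
    fin_cases i <;> fin_cases j <;>
      simp [hwdef, Complex.mul_re]
  have habsexp : ∀ (i j : Fin 2) (x y : ℝ),
      ‖Complex.exp (w i j * ((x:ℂ) - (y:ℂ)))‖ = 1 := by
    intro i j x y
    refine hexpabs _ ?_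
    rw [Complex.mul_re, hwre i j, show (((x:ℂ) - (y:ℂ)).im) = 0 by simp]
    ring
  -- the kernel
  set Ψ : ℝ → ℝ → (Fin 2 → Fin 2 → ℂ) → (Fin 2 → Fin 2 → ℂ) := fun x y v i j =>
    (expSigma3Conj (-(Complex.I * (z : ℂ)) * ((x : ℂ) - (y : ℂ)))
      ((expSigma3Conj (-(Complex.I * (a : ℂ) / 2) * ((G y : ℝ) : ℂ)) (H₁ y)) * Matrix.of v)) i j
    with hΨdef
  have hentry : ∀ (x y : ℝ) (v : Fin 2 → Fin 2 → ℂ) (i j : Fin 2),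
      Ψ x y v i j = Complex.exp (w i j * ((x:ℂ) - (y:ℂ))) * ((A y * Matrix.of v) i j) := by
    intro x y v i j
    simp only [hΨdef, hAdef]
    fin_cases i <;> fin_cases j <;>
      simp only [Fin.mk_zero, Fin.mk_one, Fin.isValue, expS_00, expS_01, expS_10, expS_11, hw00, hw01, hw10, hw11]
    · rw [zero_mul, Complex.exp_zero, one_mul]
    · rw [show (2:ℂ) * (-(Complex.I * (z:ℂ)) * ((x:ℂ) - (y:ℂ)))
          = -(2 * Complex.I * (z:ℂ)) * ((x:ℂ) - (y:ℂ)) from by ring]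
    · rw [show (-2:ℂ) * (-(Complex.I * (z:ℂ)) * ((x:ℂ) - (y:ℂ)))
          = 2 * Complex.I * (z:ℂ) * ((x:ℂ) - (y:ℂ)) from by ring]
    · rw [zero_mul, Complex.exp_zero, one_mul]
  -- product bound
  have habsmul : ∀ (y : ℝ) (N : Matrix (Fin 2) (Fin 2) ℂ) (c : ℝ),
      (∀ k l : Fin 2, ‖N k l‖ ≤ c) → ∀ i j : Fin 2,
      ‖(A y * N) i j‖ ≤ h y * c := by
    intro y N c hN i j
    have hc : 0 ≤ c := le_trans (norm_nonneg _) (hN 0 0)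
    rw [Matrix.mul_apply, Fin.sum_univ_two]
    calc ‖A y i 0 * N 0 j + A y i 1 * N 1 j‖
        ≤ ‖A y i 0 * N 0 j‖ + ‖A y i 1 * N 1 j‖ :=
          norm_add_le _ _
      _ = ‖A y i 0‖ * ‖N 0 j‖
          + ‖A y i 1‖ * ‖N 1 j‖ := by rw [norm_mul, norm_mul]
      _ ≤ g y * c + g y * c :=
          add_le_add (mul_le_mul (hAabs y i 0) (hN 0 j) (norm_nonneg _) (hgnn y))
            (mul_le_mul (hAabs y i 1) (hN 1 j) (norm_nonneg _) (hgnn y))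
      _ = h y * c := by simp only [hhdef]; ring
  -- hypotheses for volterra
  have hΨ0 : ∀ x y, Ψ x y 0 = 0 := by
    intro x y
    funext i j
    rw [show (0 : Fin 2 → Fin 2 → ℂ) i j = 0 from rfl, hentry x y 0 i j,
      show Matrix.of (0 : Fin 2 → Fin 2 → ℂ) = (0 : Matrix (Fin 2) (Fin 2) ℂ) from rfl,
      Matrix.mul_zero]
    simp
  have hΨlip : ∀ x y u v, ‖Ψ x y u - Ψ x y v‖ ≤ h y * ‖u - v‖ := by
    intro x y u v
    have hnn : 0 ≤ h y * ‖u - v‖ := mul_nonneg (hpos y) (norm_nonneg _)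
    rw [pi_norm_le_iff_of_nonneg hnn]
    intro i
    rw [pi_norm_le_iff_of_nonneg hnn]
    intro j
    rw [show (Ψ x y u - Ψ x y v) i j = Ψ x y u i j - Ψ x y v i j from rfl,
      hentry x y u i j, hentry x y v i j, ← mul_sub, norm_mul,
      habsexp, one_mul]
    have heq2 : (A y * Matrix.of u) i j - (A y * Matrix.of v) i j
        = (A y * Matrix.of (u - v)) i j := by
      rw [← Matrix.sub_apply, ← Matrix.mul_sub]
      rfl
    rw [heq2]
    refine habsmul y _ ‖u - v‖ (fun k l => ?_) i j
    rw [show Matrix.of (u - v) k l = (u - v) k l from rfl]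
    exact le_trans (norm_le_pi_norm ((u - v) k) l) (norm_le_pi_norm (u - v) k)
  have hBmeas : ∀ (μ : ℝ → (Fin 2 → Fin 2 → ℂ)), Continuous μ → ∀ (i j : Fin 2),
      Measurable fun y => (A y * Matrix.of (μ y)) i j := by
    intro μ hc i j
    have hμm : ∀ (k l : Fin 2), Measurable fun y => μ y k l := fun k l =>
      ((continuous_apply l).comp ((continuous_apply k).comp hc)).measurable
    simp only [Matrix.mul_apply, Fin.sum_univ_two, Matrix.of_apply]
    exact ((hAmeas i 0).mul (hμm 0 j)).add ((hAmeas i 1).mul (hμm 1 j))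
  have hofabs : ∀ (μ : ℝ → (Fin 2 → Fin 2 → ℂ)) (C : ℝ), (∀ s, ‖μ s‖ ≤ C) →
      ∀ (y : ℝ) (k l : Fin 2), ‖Matrix.of (μ y) k l‖ ≤ C := by
    intro μ C hC y k l
    rw [show Matrix.of (μ y) k l = μ y k l from rfl]
    exact le_trans (norm_le_pi_norm (μ y k) l) (le_trans (norm_le_pi_norm (μ y) k) (hC y))
  have hnormΨ : ∀ (μ : ℝ → (Fin 2 → Fin 2 → ℂ)) (C : ℝ), (∀ s, ‖μ s‖ ≤ C) →
      ∀ x y, ‖Ψ x y (μ y)‖ ≤ h y * C := by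
    intro μ C hC x y
    have hCnn : 0 ≤ C := le_trans (norm_nonneg _) (hC 0)
    have hnn : 0 ≤ h y * C := mul_nonneg (hpos y) hCnn
    rw [pi_norm_le_iff_of_nonneg hnn]
    intro i
    rw [pi_norm_le_iff_of_nonneg hnn]
    intro j
    rw [hentry x y (μ y) i j, norm_mul, habsexp, one_mul]
    exact habsmul y _ C (hofabs μ C hC y) i j
  have hΨmeasx : ∀ (μ : ℝ → (Fin 2 → Fin 2 → ℂ)), Continuous μ → ∀ x : ℝ,
      Measurable fun y => Ψ x y (μ y) := by
    intro μ hc x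
    rw [measurable_pi_iff]
    intro i
    rw [measurable_pi_iff]
    intro j
    simp only [hentry]
    exact ((Complex.continuous_exp.comp
      (continuous_const.mul (continuous_const.sub Complex.continuous_ofReal))).measurable).mul
      (hBmeas μ hc i j)
  have hΨmeas : ∀ μ : ℝ → (Fin 2 → Fin 2 → ℂ), Continuous μ → (∃ C, ∀ x, ‖μ x‖ ≤ C) →
      ∀ x : ℝ, AEStronglyMeasurable (fun y => Ψ x y (μ y)) (volume.restrict (Set.Iio x)) :=
    fun μ hc _ x => ((hΨmeasx μ hc x).aestronglyMeasurable).restrict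
  have hIntOn : ∀ (μ : ℝ → (Fin 2 → Fin 2 → ℂ)) (C : ℝ), (∀ s, ‖μ s‖ ≤ C) → Continuous μ →
      ∀ x : ℝ, IntegrableOn (fun y => Ψ x y (μ y)) (Set.Iio x) := by
    intro μ C hC hc x
    exact Integrable.mono' ((hint.mul_const C).restrict)
      (hΨmeas μ hc ⟨C, hC⟩ x) (Eventually.of_forall fun y => hnormΨ μ C hC x y)
  have hΨcont : ∀ μ : ℝ → (Fin 2 → Fin 2 → ℂ), Continuous μ → (∃ C, ∀ x, ‖μ x‖ ≤ C) →
      Continuous fun x => ∫ y in Set.Iio x, Ψ x y (μ y) := by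
    intro μ hc hb
    obtain ⟨C, hC⟩ := hb
    have hCnn : 0 ≤ C := le_trans (norm_nonneg _) (hC 0)
    refine continuous_pi fun i => continuous_pi fun j => ?_
    have heq : ∀ x : ℝ, (∫ y in Set.Iio x, Ψ x y (μ y)) i j
        = ∫ y in Set.Iio x,
            Complex.exp (w i j * ((x:ℂ) - (y:ℂ))) * ((A y * Matrix.of (μ y)) i j) := by
      intro x
      rw [integral_apply₂ (hIntOn μ C hC hc x) i j]
      exact setIntegral_congr_fun measurableSet_Iio fun y _ => hentry x y (μ y) i j
    simp_rw [heq]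
    refine cont_aux (w i j) (hwre i j) ?_
    refine Integrable.mono' (hint.mul_const C) ((hBmeas μ hc i j).aestronglyMeasurable)
      (Eventually.of_forall fun y => ?_)
    exact habsmul y _ C (hofabs μ C hC y) i j
  -- apply the abstract theorem
  have main := volterra_exists_unique (Ψ := Ψ) (h := h)
    (v₀ := fun i j => (1 : Matrix (Fin 2) (Fin 2) ℂ) i j)
    hint hpos hΨ0 hΨlip hΨmeas hΨcont
  obtain ⟨μ₀, ⟨hc₀, ⟨C₀, hC₀⟩, heq₀⟩, huniq₀⟩ := main
  refine ⟨μ₀, ⟨hc₀, ?_, ?_⟩, ?_⟩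
  · refine ⟨C₀, fun x i j => ?_⟩
    exact le_trans (norm_le_pi_norm (μ₀ x i) j) (le_trans (norm_le_pi_norm (μ₀ x) i) (hC₀ x))
  · intro x i j
    have hx := congrFun (congrFun (heq₀ x) i) j
    rw [hx, show ((fun i j => (1 : Matrix (Fin 2) (Fin 2) ℂ) i j)
        + (∫ y in Set.Iio x, Ψ x y (μ₀ y))) i j
      = (1 : Matrix (Fin 2) (Fin 2) ℂ) i j + (∫ y in Set.Iio x, Ψ x y (μ₀ y)) i j from rfl]
    congr 1
    rw [integral_apply₂ (hIntOn μ₀ C₀ hC₀ hc₀ x) i j]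
    rfl
  · rintro ρ ⟨hρc, ⟨C, hCρ⟩, hρeq⟩
    have hCnn : 0 ≤ max C 0 := le_max_right C 0
    let ρ' : ℝ → (Fin 2 → Fin 2 → ℂ) := ρ
    have hbnd : ∀ s : ℝ, ‖ρ' s‖ ≤ max C 0 := by
      intro s
      rw [pi_norm_le_iff_of_nonneg hCnn]
      intro i
      rw [pi_norm_le_iff_of_nonneg hCnn]
      intro j
      exact le_trans (hCρ s i j) (le_max_left C 0)
    have hρ'c : Continuous ρ' := hρc
    refine huniq₀ ρ' ⟨hρ'c, ⟨max C 0, hbnd⟩, ?_⟩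
    intro x
    funext i j
    rw [show ((fun i j => (1 : Matrix (Fin 2) (Fin 2) ℂ) i j)
        + (∫ y in Set.Iio x, Ψ x y (ρ' y))) i j
      = (1 : Matrix (Fin 2) (Fin 2) ℂ) i j + (∫ y in Set.Iio x, Ψ x y (ρ' y)) i j from rfl]
    rw [integral_apply₂ (hIntOn ρ' (max C 0) hbnd hρ'c x) i j]
    exact hρeq x i j
end
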